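/- arXiv:1301.5630 — 3 statements merged into one kernel-verified Lean document; each statement's English description precedes it below -/
import Mathlib

section
/- Fix s > 0. Any s-thick partition structure (P_ω)_{ω∈T} on a complete metric space (Z,D) admits a substructure (P_ω)_{ω∈T̃}, where T̃ ⊆ T is a subtree, whose limit set π(T̃(∞)) is Ahlfors s-regular; moreover T̃ can be chosen so that for each ω ∈ T̃, the set of children T̃(ω) is an initial segment of T(ω). -/
open Metric MeasureTheory

/-- The initial segment of length `n` of an infinite string `ω : ℕ → ℕ`, as a list. -/
def pre (ω : ℕ → ℕ) (n : ℕ) : List ℕ := List.ofFn (fun i : Fin n => ω i)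

/-- The limit set of the substructure indexed by the subtree `T'`: all points lying on some
infinite branch of `T'`. -/
def limitSet {Z : Type*} [MetricSpace Z] (T' : Set (List ℕ)) (P : List ℕ → Set Z) : Set Z :=
  {w : Z | ∃ ω : ℕ → ℕ, (∀ n : ℕ, pre ω n ∈ T') ∧ ∀ n : ℕ, w ∈ P (pre ω n)}

namespace AhlforsProof
set_option linter.unusedSectionVars false
open scoped ENNReal NNReal

structure Setup (Z : Type*) [MetricSpace Z] where
  T : Set (List ℕ)
  P : List ℕ → Set Z
  s : ℝ
  kap : ℝ
  lam : ℝ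
  hs : 0 < s
  hkap : 0 < kap
  hlam0 : 0 < lam
  hlam1 : lam < 1
  hroot : ([] : List ℕ) ∈ T
  hpref : ∀ ω ∈ T, ∀ τ : List ℕ, τ <+: ω → τ ∈ T
  hclosed : ∀ ω ∈ T, IsClosed (P ω)
  hdiam : ∀ ω ∈ T, 0 < Metric.diam (P ω)
  hnest : ∀ ω ∈ T, ∀ τ ∈ T, ω <+: τ → P τ ⊆ P ω
  hdisj : ∀ ω ∈ T, ∀ τ ∈ T, ¬ ω <+: τ → ¬ τ <+: ω → Disjoint (P ω) (P τ)
  hsep : ∀ ω ∈ T, ∀ a : ℕ, ω ++ [a] ∈ T →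
      (∀ p ∈ P (ω ++ [a]), ∀ q ∉ P ω, kap * Metric.diam (P ω) ≤ dist p q) ∧
      kap * Metric.diam (P ω) ≤ Metric.diam (P (ω ++ [a])) ∧
      Metric.diam (P (ω ++ [a])) ≤ lam * Metric.diam (P ω)
  hthick : ∀ ω ∈ T, ENNReal.ofReal (Metric.diam (P ω) ^ s) ≤
      ∑' a : {a : ℕ // ω ++ [a] ∈ T}, ENNReal.ofReal (Metric.diam (P (ω ++ [a.1])) ^ s)

variable {Z : Type*} [MetricSpace Z] (S : Setup Z)

attribute [local instance] Classical.propDecidable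

variable [CompleteSpace Z]

/-- diameter of the cell -/
noncomputable def dm (ω : List ℕ) : ℝ := Metric.diam (S.P ω)

/-- partial sums of `D_{ωa}^s` over children `a ≤ N`. -/
noncomputable def Usum (ω : List ℕ) (N : ℕ) : ℝ :=
  ∑ a ∈ Finset.range (N+1), if ω ++ [a] ∈ S.T then dm S (ω ++ [a]) ^ S.s else 0

lemma Usum_nonneg (ω : List ℕ) (N : ℕ) : 0 ≤ Usum S ω N := by
  unfold Usum
  apply Finset.sum_nonneg
  intro a _
  split
  · exact Real.rpow_nonneg Metric.diam_nonneg _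
  · exact le_rfl

lemma Usum_mono (ω : List ℕ) : Monotone (Usum S ω) := by
  intro i j hij
  unfold Usum
  apply Finset.sum_le_sum_of_subset_of_nonneg
  · exact Finset.range_subset_range.2 (by omega)
  · intro a _ _
    split
    · exact Real.rpow_nonneg Metric.diam_nonneg _
    · exact le_rfl

/-- selected cutoff -/
noncomputable def Nsel (ω : List ℕ) (t : ℝ) : ℕ := sInf {N | t < Usum S ω N}

noncomputable def mrev : List ℕ → ℝ
  | [] => (1 - S.lam ^ S.s) * dm S [] ^ S.s
  | a :: tl =>
    if tl.reverse ++ [a] ∈ S.T ∧ a ≤ Nsel S tl.reverse (mrev tl)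
    then mrev tl * (dm S (tl.reverse ++ [a]) ^ S.s /
          Usum S tl.reverse (Nsel S tl.reverse (mrev tl)))
    else 0

noncomputable def mass (ω : List ℕ) : ℝ := mrev S ω.reverse

/-- the pruned subtree -/
def Tsub : Set (List ℕ) := {ω | 0 < mass S ω}

lemma mass_nil : mass S [] = (1 - S.lam ^ S.s) * dm S [] ^ S.s := rfl

lemma mass_concat (ω : List ℕ) (a : ℕ) :
    mass S (ω ++ [a]) =
      if ω ++ [a] ∈ S.T ∧ a ≤ Nsel S ω (mass S ω)
      then mass S ω * (dm S (ω ++ [a]) ^ S.s / Usum S ω (Nsel S ω (mass S ω)))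
      else 0 := by
  unfold mass
  rw [List.reverse_append]
  show mrev S (a :: ω.reverse) = _
  rw [mrev]
  simp [List.reverse_reverse]

lemma mass_nonneg (ω : List ℕ) : 0 ≤ mass S ω := by
  induction ω using List.reverseRecOn with
  | nil =>
    rw [mass_nil]
    have : S.lam ^ S.s < 1 := Real.rpow_lt_one S.hlam0.le S.hlam1 S.hs
    have h2 : (0:ℝ) ≤ 1 - S.lam ^ S.s := by linarith
    exact mul_nonneg h2 (Real.rpow_nonneg Metric.diam_nonneg _)
  | append_singleton ω a ih =>
    rw [mass_concat]
    split
    · have h1 : (0:ℝ) ≤ dm S (ω ++ [a]) ^ S.s / Usum S ω (Nsel S ω (mass S ω)) := by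
        apply div_nonneg
        · exact Real.rpow_nonneg Metric.diam_nonneg _
        · exact Usum_nonneg S ω _
      exact mul_nonneg ih h1
    · exact le_rfl


noncomputable def alph : ℝ := 1 - S.lam ^ S.s

lemma lam_rpow_lt_one : S.lam ^ S.s < 1 := Real.rpow_lt_one S.hlam0.le S.hlam1 S.hs

lemma lam_rpow_nonneg : 0 ≤ S.lam ^ S.s := Real.rpow_nonneg S.hlam0.le _

lemma alph_pos : 0 < alph S := by
  have := lam_rpow_lt_one S
  unfold alph; linarith

lemma alph_lt_one : alph S < 1 := by
  have : (0:ℝ) < S.lam ^ S.s := Real.rpow_pos_of_pos S.hlam0 _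
  unfold alph; linarith

lemma dm_pos {ω : List ℕ} (h : ω ∈ S.T) : 0 < dm S ω := S.hdiam ω h

lemma dms_pos {ω : List ℕ} (h : ω ∈ S.T) : 0 < dm S ω ^ S.s :=
  Real.rpow_pos_of_pos (dm_pos S h) _

lemma child_term_le {ω : List ℕ} (h : ω ∈ S.T) (a : ℕ) :
    (if ω ++ [a] ∈ S.T then dm S (ω ++ [a]) ^ S.s else 0) ≤ S.lam ^ S.s * dm S ω ^ S.s := by
  split
  case isTrue ha =>
    have h1 : dm S (ω ++ [a]) ≤ S.lam * dm S ω := (S.hsep ω h a ha).2.2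
    calc dm S (ω ++ [a]) ^ S.s ≤ (S.lam * dm S ω) ^ S.s :=
          Real.rpow_le_rpow Metric.diam_nonneg h1 S.hs.le
      _ = S.lam ^ S.s * dm S ω ^ S.s := Real.mul_rpow S.hlam0.le Metric.diam_nonneg
  case isFalse =>
    exact mul_nonneg (lam_rpow_nonneg S) (Real.rpow_nonneg Metric.diam_nonneg _)

lemma exists_lt_Usum {ω : List ℕ} (hω : ω ∈ S.T) {t : ℝ} (ht0 : 0 ≤ t)
    (ht : t < dm S ω ^ S.s) : {N | t < Usum S ω N}.Nonempty := by
  by_contra h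
  rw [Set.not_nonempty_iff_eq_empty] at h
  have hall : ∀ N, Usum S ω N ≤ t := by
    intro N
    by_contra hN
    push_neg at hN
    have : N ∈ {N | t < Usum S ω N} := hN
    rw [h] at this
    exact this
  have htsum : (∑' a : {a : ℕ // ω ++ [a] ∈ S.T},
      ENNReal.ofReal (Metric.diam (S.P (ω ++ [a.1])) ^ S.s)) ≤ ENNReal.ofReal t := by
    rw [ENNReal.tsum_eq_iSup_sum]
    apply iSup_le
    intro F
    set N : ℕ := F.sup (fun x => x.1) with hNdef
    have h1 : ∀ x ∈ F, (0:ℝ) ≤ Metric.diam (S.P (ω ++ [x.1])) ^ S.s :=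
      fun x _ => Real.rpow_nonneg Metric.diam_nonneg _
    rw [← ENNReal.ofReal_sum_of_nonneg h1]
    apply ENNReal.ofReal_le_ofReal
    calc (∑ x ∈ F, Metric.diam (S.P (ω ++ [x.1])) ^ S.s)
        = ∑ a ∈ F.image Subtype.val, dm S (ω ++ [a]) ^ S.s := by
          rw [Finset.sum_image (fun x _ y _ h => Subtype.ext h)]; rfl
      _ = ∑ a ∈ F.image Subtype.val, (if ω ++ [a] ∈ S.T then dm S (ω ++ [a]) ^ S.s else 0) := by
          apply Finset.sum_congr rfl
          intro a ha
          obtain ⟨x, _, rfl⟩ := Finset.mem_image.1 ha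
          rw [if_pos x.2]
      _ ≤ Usum S ω N := by
          apply Finset.sum_le_sum_of_subset_of_nonneg
          · intro a ha
            obtain ⟨x, hx, rfl⟩ := Finset.mem_image.1 ha
            exact Finset.mem_range.2 (Nat.lt_succ_of_le (Finset.le_sup (f := fun x => x.1) hx))
          · intro a _ _
            split
            · exact Real.rpow_nonneg Metric.diam_nonneg _
            · exact le_rfl
      _ ≤ t := hall N
  have := le_trans (S.hthick ω hω) htsum
  rw [ENNReal.ofReal_le_ofReal_iff ht0] at this
  exact absurd ht (not_lt.2 this)

lemma Nsel_spec {ω : List ℕ} (hω : ω ∈ S.T) {t : ℝ} (ht0 : 0 ≤ t)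
    (ht : t < dm S ω ^ S.s) : t < Usum S ω (Nsel S ω t) :=
  Nat.sInf_mem (exists_lt_Usum S hω ht0 ht)

lemma Usum_Nsel_le {ω : List ℕ} (hω : ω ∈ S.T) {t : ℝ} (ht0 : 0 ≤ t) :
    Usum S ω (Nsel S ω t) ≤ t + S.lam ^ S.s * dm S ω ^ S.s := by
  rcases Nat.eq_zero_or_pos (Nsel S ω t) with h0 | hpos
  · rw [h0]
    have : Usum S ω 0 = (if ω ++ [0] ∈ S.T then dm S (ω ++ [0]) ^ S.s else 0) := by
      unfold Usum; simp
    rw [this]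
    have := child_term_le S hω 0
    linarith
  · obtain ⟨K, hK⟩ : ∃ K, Nsel S ω t = K + 1 := ⟨Nsel S ω t - 1, by omega⟩
    rw [hK]
    have hmin : Usum S ω K ≤ t := by
      by_contra hc
      push_neg at hc
      have : Nsel S ω t ≤ K := Nat.sInf_le hc
      omega
    have hsucc : Usum S ω (K + 1) =
        Usum S ω K + (if ω ++ [K+1] ∈ S.T then dm S (ω ++ [K+1]) ^ S.s else 0) := by
      unfold Usum
      rw [Finset.sum_range_succ]
    rw [hsucc]
    have := child_term_le S hω (K+1)
    linarith

lemma term_le_Usum {ω : List ℕ} {a N : ℕ} (ha : a ≤ N) (haT : ω ++ [a] ∈ S.T) :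
    dm S (ω ++ [a]) ^ S.s ≤ Usum S ω N := by
  unfold Usum
  have : dm S (ω ++ [a]) ^ S.s = (if ω ++ [a] ∈ S.T then dm S (ω ++ [a]) ^ S.s else 0) := by
    rw [if_pos haT]
  rw [this]
  apply Finset.single_le_sum (f := fun a => if ω ++ [a] ∈ S.T then dm S (ω ++ [a]) ^ S.s else 0)
  · intro i _
    split
    · exact Real.rpow_nonneg Metric.diam_nonneg _
    · exact le_rfl
  · exact Finset.mem_range.2 (Nat.lt_succ_of_le ha)

lemma inv {ω : List ℕ} (h : ω ∈ Tsub S) :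
    ω ∈ S.T ∧ alph S * dm S ω ^ S.s ≤ mass S ω ∧ mass S ω < dm S ω ^ S.s := by
  induction ω using List.reverseRecOn with
  | nil =>
    refine ⟨S.hroot, le_of_eq rfl, ?_⟩
    rw [mass_nil]
    have h1 := dms_pos S S.hroot
    have h2 := alph_lt_one S
    show alph S * dm S [] ^ S.s < dm S [] ^ S.s
    nlinarith
  | append_singleton ω a ih =>
    have h' : (0:ℝ) < mass S (ω ++ [a]) := h
    rw [mass_concat] at h'
    by_cases hc : ω ++ [a] ∈ S.T ∧ a ≤ Nsel S ω (mass S ω)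
    swap
    · rw [if_neg hc] at h'; exact absurd h' (lt_irrefl 0)
    rw [if_pos hc] at h'
    obtain ⟨haT, haN⟩ := hc
    have hfac : 0 ≤ dm S (ω ++ [a]) ^ S.s / Usum S ω (Nsel S ω (mass S ω)) :=
      div_nonneg (Real.rpow_nonneg Metric.diam_nonneg _) (Usum_nonneg S ω _)
    have hmω : 0 < mass S ω := by
      by_contra hm
      push_neg at hm
      exact absurd h' (not_lt.2 (mul_nonpos_of_nonpos_of_nonneg hm hfac))
    obtain ⟨hωT, hlow, hup⟩ := ih hmω
    set t := mass S ω with htdef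
    set N := Nsel S ω t with hNdef
    set U := Usum S ω N with hUdef
    have htU : t < U := Nsel_spec S hωT hmω.le hup
    have hUle : U ≤ t + S.lam ^ S.s * dm S ω ^ S.s := Usum_Nsel_le S hωT hmω.le
    have hDa : 0 < dm S (ω ++ [a]) ^ S.s := dms_pos S haT
    have hDaU : dm S (ω ++ [a]) ^ S.s ≤ U := term_le_Usum S haN haT
    have hU : 0 < U := lt_of_lt_of_le hDa hDaU
    have hmass : mass S (ω ++ [a]) = t * (dm S (ω ++ [a]) ^ S.s / U) := by
      rw [mass_concat, if_pos ⟨haT, haN⟩]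
    refine ⟨haT, ?_, ?_⟩
    · -- lower bound
      have halU : alph S * U ≤ t := by
        have hL := lam_rpow_nonneg S
        have h1 : alph S * dm S ω ^ S.s ≤ t := hlow
        have h2 : alph S = 1 - S.lam ^ S.s := rfl
        nlinarith [alph_pos S]
      rw [hmass]
      rw [← sub_nonneg] at halU ⊢
      have : t * (dm S (ω ++ [a]) ^ S.s / U) - alph S * dm S (ω ++ [a]) ^ S.s
          = (t - alph S * U) * (dm S (ω ++ [a]) ^ S.s / U) := by
        field_simp
      rw [this]
      exact mul_nonneg halU hfac
    · -- upper bound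
      rw [hmass]
      have h1 : t * (dm S (ω ++ [a]) ^ S.s / U) = dm S (ω ++ [a]) ^ S.s * (t / U) := by
        ring
      rw [h1]
      have h2 : t / U < 1 := (div_lt_one hU).2 htU
      nlinarith

lemma Tsub_subset_T : Tsub S ⊆ S.T := fun _ h => (inv S h).1

lemma root_mem_Tsub : ([] : List ℕ) ∈ Tsub S := by
  show (0:ℝ) < mass S []
  rw [mass_nil]
  exact mul_pos (alph_pos S) (dms_pos S S.hroot)

lemma mass_lower {ω : List ℕ} (h : ω ∈ Tsub S) : alph S * dm S ω ^ S.s ≤ mass S ω := (inv S h).2.1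

lemma mass_upper {ω : List ℕ} (h : ω ∈ Tsub S) : mass S ω < dm S ω ^ S.s := (inv S h).2.2

lemma mem_child_iff {ω : List ℕ} (h : ω ∈ Tsub S) (a : ℕ) :
    ω ++ [a] ∈ Tsub S ↔ (ω ++ [a] ∈ S.T ∧ a ≤ Nsel S ω (mass S ω)) := by
  constructor
  · intro hc
    have h' : (0:ℝ) < mass S (ω ++ [a]) := hc
    rw [mass_concat] at h'
    by_cases hcond : ω ++ [a] ∈ S.T ∧ a ≤ Nsel S ω (mass S ω)
    · exact hcond
    · rw [if_neg hcond] at h'; exact absurd h' (lt_irrefl 0)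
  · rintro ⟨haT, haN⟩
    show (0:ℝ) < mass S (ω ++ [a])
    rw [mass_concat, if_pos ⟨haT, haN⟩]
    have hωT := Tsub_subset_T S h
    have hU : 0 < Usum S ω (Nsel S ω (mass S ω)) :=
      lt_of_lt_of_le (dms_pos S haT) (term_le_Usum S haN haT)
    exact mul_pos h (div_pos (dms_pos S haT) hU)

lemma prefix_step {ω : List ℕ} {a : ℕ} (h : ω ++ [a] ∈ Tsub S) : ω ∈ Tsub S := by
  have h' : (0:ℝ) < mass S (ω ++ [a]) := h
  rw [mass_concat] at h'
  split at h'
  · have hfac : 0 ≤ dm S (ω ++ [a]) ^ S.s / Usum S ω (Nsel S ω (mass S ω)) :=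
      div_nonneg (Real.rpow_nonneg Metric.diam_nonneg _) (Usum_nonneg S ω _)
    by_contra hm
    have hm' : mass S ω ≤ 0 := not_lt.1 hm
    exact absurd h' (not_lt.2 (mul_nonpos_of_nonpos_of_nonneg hm' hfac))
  · exact absurd h' (lt_irrefl 0)

lemma Tsub_prefix_closed {ω : List ℕ} (h : ω ∈ Tsub S) : ∀ τ : List ℕ, τ <+: ω → τ ∈ Tsub S := by
  induction ω using List.reverseRecOn with
  | nil =>
    intro τ hτ
    rw [List.prefix_nil.1 hτ]
    exact h
  | append_singleton ω a ih =>
    intro τ hτ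
    rcases List.prefix_concat_iff.1 hτ with rfl | hτ'
    · exact h
    · exact ih (prefix_step S h) τ hτ'

/-- the selected children of a node, as a Finset -/
noncomputable def childrenF (ω : List ℕ) : Finset ℕ :=
  (Finset.range (Nsel S ω (mass S ω) + 1)).filter (fun a => ω ++ [a] ∈ S.T)

lemma mem_childrenF {ω : List ℕ} (h : ω ∈ Tsub S) {a : ℕ} :
    a ∈ childrenF S ω ↔ ω ++ [a] ∈ Tsub S := by
  rw [mem_child_iff S h]
  unfold childrenF
  rw [Finset.mem_filter, Finset.mem_range]
  constructor
  · rintro ⟨h1, h2⟩; exact ⟨h2, by omega⟩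
  · rintro ⟨h1, h2⟩; exact ⟨by omega, h1⟩

lemma sum_childrenF_dms {ω : List ℕ} :
    ∑ a ∈ childrenF S ω, dm S (ω ++ [a]) ^ S.s = Usum S ω (Nsel S ω (mass S ω)) := by
  unfold childrenF Usum
  rw [Finset.sum_filter]

lemma mass_additive {ω : List ℕ} (h : ω ∈ Tsub S) :
    ∑ a ∈ childrenF S ω, mass S (ω ++ [a]) = mass S ω := by
  have hωT := Tsub_subset_T S h
  set t := mass S ω with htdef
  set N := Nsel S ω t with hNdef
  set U := Usum S ω N with hUdef
  have htU : t < U := Nsel_spec S hωT (mass_nonneg S ω) (mass_upper S h)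
  have hU : 0 < U := lt_of_le_of_lt (mass_nonneg S ω) htU
  have h1 : ∀ a ∈ childrenF S ω, mass S (ω ++ [a]) = t * (dm S (ω ++ [a]) ^ S.s / U) := by
    intro a ha
    unfold childrenF at ha
    rw [Finset.mem_filter, Finset.mem_range] at ha
    rw [mass_concat, if_pos ⟨ha.2, by omega⟩]
  rw [Finset.sum_congr rfl h1]
  have : ∑ a ∈ childrenF S ω, t * (dm S (ω ++ [a]) ^ S.s / U)
      = (t / U) * ∑ a ∈ childrenF S ω, dm S (ω ++ [a]) ^ S.s := by
    rw [Finset.mul_sum]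
    apply Finset.sum_congr rfl
    intro a _
    ring
  rw [this, sum_childrenF_dms]
  field_simp
  rfl

lemma child_exists {ω : List ℕ} (h : ω ∈ Tsub S) : ∃ a : ℕ, ω ++ [a] ∈ Tsub S := by
  by_contra hc
  push_neg at hc
  have h1 : ∑ a ∈ childrenF S ω, mass S (ω ++ [a]) ≤ 0 := by
    apply Finset.sum_nonpos
    intro a ha
    have := hc a
    have h2 : ¬ (0:ℝ) < mass S (ω ++ [a]) := this
    exact not_lt.1 h2
  rw [mass_additive S h] at h1
  exact absurd h (not_lt.2 h1 : ¬ (0:ℝ) < mass S ω)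

lemma mass_child_le {ω : List ℕ} {a : ℕ} (h : ω ++ [a] ∈ Tsub S) :
    mass S (ω ++ [a]) ≤ mass S ω := by
  have hω := prefix_step S h
  have hωT := Tsub_subset_T S hω
  obtain ⟨haT, haN⟩ := (mem_child_iff S hω a).1 h
  have hU : 0 < Usum S ω (Nsel S ω (mass S ω)) :=
    lt_of_lt_of_le (dms_pos S haT) (term_le_Usum S haN haT)
  have hle : dm S (ω ++ [a]) ^ S.s / Usum S ω (Nsel S ω (mass S ω)) ≤ 1 :=
    (div_le_one hU).2 (term_le_Usum S haN haT)
  rw [mass_concat, if_pos ⟨haT, haN⟩]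
  calc mass S ω * (dm S (ω ++ [a]) ^ S.s / Usum S ω (Nsel S ω (mass S ω)))
      ≤ mass S ω * 1 := by
        apply mul_le_mul_of_nonneg_left hle (mass_nonneg S ω)
    _ = mass S ω := mul_one _

lemma mass_le_of_prefix {ω τ : List ℕ} (h : ω ∈ Tsub S) (hτ : τ <+: ω) :
    mass S ω ≤ mass S τ := by
  induction ω using List.reverseRecOn with
  | nil =>
    rw [List.prefix_nil.1 hτ]
  | append_singleton ω a ih =>
    rcases List.prefix_concat_iff.1 hτ with rfl | hτ'
    · exact le_rfl
    · exact le_trans (mass_child_le S h) (ih (prefix_step S h) hτ')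


/-! ### Branches and the limit set -/

lemma pre_zero (β : ℕ → ℕ) : pre β 0 = [] := rfl

lemma pre_succ (β : ℕ → ℕ) (n : ℕ) : pre β (n+1) = pre β n ++ [β n] := by
  unfold pre
  rw [List.ofFn_succ']
  simp [List.concat_eq_append]

lemma pre_length (β : ℕ → ℕ) (n : ℕ) : (pre β n).length = n := by simp [pre]

lemma pre_prefix (β : ℕ → ℕ) {m n : ℕ} (h : m ≤ n) : pre β m <+: pre β n := by
  induction n with
  | zero => rw [Nat.le_zero.1 h]
  | succ k ih =>
    rcases Nat.lt_succ_iff_lt_or_eq.1 (Nat.lt_succ_of_le h) with h' | h'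
    · exact (ih (by omega)).trans (by rw [pre_succ]; exact List.prefix_append _ _)
    · rw [h']

lemma cellP_nonempty {ω : List ℕ} (h : ω ∈ S.T) : (S.P ω).Nonempty := by
  by_contra hc
  rw [Set.not_nonempty_iff_eq_empty] at hc
  have := S.hdiam ω h
  rw [hc, Metric.diam_empty] at this
  exact lt_irrefl 0 this

lemma cell_bounded {ω : List ℕ} (h : ω ∈ S.T) : Bornology.IsBounded (S.P ω) := by
  by_contra hc
  have := S.hdiam ω h
  rw [Metric.diam_eq_zero_of_unbounded hc] at this
  exact lt_irrefl 0 this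

lemma cell_unique {ω τ : List ℕ} (hω : ω ∈ S.T) (hτ : τ ∈ S.T) (hlen : ω.length = τ.length)
    (hne : (S.P ω ∩ S.P τ).Nonempty) : ω = τ := by
  by_contra hne'
  have h1 : ¬ ω <+: τ := fun hp => hne' (hp.eq_of_length hlen)
  have h2 : ¬ τ <+: ω := fun hp => hne' (hp.eq_of_length hlen.symm).symm
  have := S.hdisj ω hω τ hτ h1 h2
  rw [Set.disjoint_iff_inter_eq_empty] at this
  rw [this] at hne
  exact Set.not_nonempty_empty hne

/-- the limit set of the pruned structure -/
def Xs : Set Z := limitSet (Tsub S) S.P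

lemma branch_eq {z : Z} {β : ℕ → ℕ} (hβ1 : ∀ n, pre β n ∈ Tsub S)
    (hβ2 : ∀ n, z ∈ S.P (pre β n)) {τ : List ℕ} (hτ : τ ∈ Tsub S) (hz : z ∈ S.P τ) :
    τ = pre β τ.length := by
  apply cell_unique S (Tsub_subset_T S hτ) (Tsub_subset_T S (hβ1 τ.length))
  · rw [pre_length]
  · exact ⟨z, hz, hβ2 τ.length⟩

lemma branch_sep {z : Z} {β : ℕ → ℕ} (hβ1 : ∀ n, pre β n ∈ Tsub S)
    (hβ2 : ∀ n, z ∈ S.P (pre β n)) (n : ℕ) {q : Z} (hq : q ∉ S.P (pre β n)) :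
    S.kap * dm S (pre β n) ≤ dist z q := by
  have h1 : pre β n ∈ S.T := Tsub_subset_T S (hβ1 n)
  have h2 : pre β (n+1) ∈ S.T := Tsub_subset_T S (hβ1 (n+1))
  rw [pre_succ] at h2
  have := (S.hsep (pre β n) h1 (β n) h2).1 z (by rw [← pre_succ]; exact hβ2 (n+1)) q hq
  exact this

lemma dm_child_le {ω : List ℕ} {a : ℕ} (hω : ω ∈ S.T) (ha : ω ++ [a] ∈ S.T) :
    dm S (ω ++ [a]) ≤ S.lam * dm S ω := (S.hsep ω hω a ha).2.2

lemma dm_le_level {ω : List ℕ} (h : ω ∈ Tsub S) :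
    dm S ω ≤ S.lam ^ ω.length * dm S [] := by
  induction ω using List.reverseRecOn with
  | nil => simp
  | append_singleton ω a ih =>
    have hω := prefix_step S h
    have h1 := dm_child_le S (Tsub_subset_T S hω) (Tsub_subset_T S h)
    have h2 := ih hω
    calc dm S (ω ++ [a]) ≤ S.lam * dm S ω := h1
      _ ≤ S.lam * (S.lam ^ ω.length * dm S []) :=
          mul_le_mul_of_nonneg_left h2 S.hlam0.le
      _ = S.lam ^ (ω ++ [a]).length * dm S [] := by
          rw [List.length_append, List.length_singleton, pow_succ]
          ring

lemma chain_to_branch (τ : ℕ → List ℕ) (hlen : ∀ n, (τ n).length = n)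
    (hpre : ∀ n, ∃ a, τ (n+1) = τ n ++ [a]) :
    ∃ β : ℕ → ℕ, ∀ n, pre β n = τ n := by
  refine ⟨fun n => (τ (n+1)).getD n 0, ?_⟩
  intro n
  induction n with
  | zero =>
    rw [pre_zero]
    exact (List.length_eq_zero_iff.1 (hlen 0)).symm
  | succ n ih =>
    obtain ⟨b, hb⟩ := hpre n
    rw [pre_succ, ih, hb, List.getD_append_right _ _ _ _ (le_of_eq (hlen n)), hlen n]
    simp

/-- every node of the pruned tree contains a point of the limit set -/
lemma cell_nonempty {ω : List ℕ} (h : ω ∈ Tsub S) :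
    ∃ z, z ∈ Xs S ∧ z ∈ S.P ω := by
  classical
  -- build a chain through ω
  let pick : List ℕ → ℕ := fun ρ =>
    if h : ρ ∈ Tsub S then Classical.choose (child_exists S h) else 0
  have pick_spec : ∀ ρ, ρ ∈ Tsub S → ρ ++ [pick ρ] ∈ Tsub S := by
    intro ρ hρ
    simp only [pick, dif_pos hρ]
    exact Classical.choose_spec (child_exists S hρ)
  let τ : ℕ → List ℕ := fun n => Nat.rec ([] : List ℕ)
    (fun k τk => if k + 1 ≤ ω.length then ω.take (k+1) else τk ++ [pick τk]) n
  have hτ0 : τ 0 = [] := rfl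
  have hτsucc : ∀ k, τ (k+1) = if k + 1 ≤ ω.length then ω.take (k+1) else τ k ++ [pick (τ k)] :=
    fun k => rfl
  have htake : ∀ n, n ≤ ω.length → τ n = ω.take n := by
    intro n hn
    cases n with
    | zero => simp [hτ0]
    | succ k => rw [hτsucc, if_pos hn]
  have key : ∀ n, τ n ∈ Tsub S ∧ (τ n).length = n ∧ ∃ a, τ (n+1) = τ n ++ [a] := by
    intro n
    induction n with
    | zero =>
      refine ⟨by rw [hτ0]; exact Tsub_prefix_closed S h [] List.nil_prefix, by simp [hτ0], ?_⟩
      by_cases h1 : 1 ≤ ω.length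
      · rw [hτsucc, if_pos h1, hτ0]
        obtain ⟨b, t, hbt⟩ : ∃ b t, ω = b :: t := by
          cases ω with
          | nil => simp at h1
          | cons b t => exact ⟨b, t, rfl⟩
        exact ⟨b, by rw [hbt]; simp⟩
      · rw [hτsucc, if_neg h1, hτ0]
        exact ⟨pick [], rfl⟩
    | succ k ih =>
      obtain ⟨ih1, ih2, ih3⟩ := ih
      have hksub : τ (k+1) ∈ Tsub S := by
        by_cases hk : k + 1 ≤ ω.length
        · rw [hτsucc, if_pos hk]
          exact Tsub_prefix_closed S h _ (List.take_prefix _ _)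
        · rw [hτsucc, if_neg hk]
          exact pick_spec _ ih1
      have hklen : (τ (k+1)).length = k + 1 := by
        obtain ⟨a, ha⟩ := ih3
        rw [ha, List.length_append, ih2, List.length_singleton]
      refine ⟨hksub, hklen, ?_⟩
      by_cases hk : k + 2 ≤ ω.length
      · have h1 : τ (k+1) = ω.take (k+1) := htake (k+1) (by omega)
        have hlt : k + 1 < ω.length := by omega
        have key2 : List.take (k+2) ω = List.take (k+1) ω ++ [ω.get ⟨k+1, hlt⟩] := by
          rw [List.take_succ]
          simp [List.getElem?_eq_getElem hlt]
        rw [← h1] at key2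
        exact ⟨ω.get ⟨k+1, hlt⟩, by rw [hτsucc (k+1), if_pos hk]; exact key2⟩
      · rw [hτsucc (k+1), if_neg hk]
        exact ⟨_, rfl⟩
  -- the chain of cells is nested with diameters → 0; take a limit point
  have hchain : ∀ m n, m ≤ n → τ m <+: τ n := by
    intro m n hmn
    induction n with
    | zero => rw [Nat.le_zero.1 hmn]
    | succ k ih =>
      rcases Nat.lt_succ_iff_lt_or_eq.1 (Nat.lt_succ_of_le hmn) with h' | h'
      · obtain ⟨a, ha⟩ := (key k).2.2
        exact (ih (by omega)).trans (by rw [ha]; exact List.prefix_append _ _)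
      · rw [h']
  have hnested : ∀ m n, m ≤ n → S.P (τ n) ⊆ S.P (τ m) := by
    intro m n hmn
    exact S.hnest _ (Tsub_subset_T S (key m).1) _ (Tsub_subset_T S (key n).1) (hchain m n hmn)
  have hx : ∀ n, ∃ x, x ∈ S.P (τ n) := fun n => cellP_nonempty S (Tsub_subset_T S (key n).1)
  choose x hxmem using hx
  have hdist : ∀ n, dist (x n) (x (n+1)) ≤ dm S [] * S.lam ^ n := by
    intro n
    have h1 : x (n+1) ∈ S.P (τ n) := hnested n (n+1) (by omega) (hxmem (n+1))
    have h2 : dist (x n) (x (n+1)) ≤ dm S (τ n) :=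
      Metric.dist_le_diam_of_mem (cell_bounded S (Tsub_subset_T S (key n).1)) (hxmem n) h1
    have h3 : dm S (τ n) ≤ S.lam ^ n * dm S [] := by
      have := dm_le_level S (key n).1
      rw [(key n).2.1] at this
      exact this
    calc dist (x n) (x (n+1)) ≤ S.lam ^ n * dm S [] := le_trans h2 h3
      _ = dm S [] * S.lam ^ n := mul_comm _ _
  have hcauchy : CauchySeq x := cauchySeq_of_le_geometric S.lam (dm S []) S.hlam1 hdist
  obtain ⟨z, hz⟩ := cauchySeq_tendsto_of_complete hcauchy
  have hzmem : ∀ n, z ∈ S.P (τ n) := by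
    intro n
    apply IsClosed.mem_of_tendsto (S.hclosed _ (Tsub_subset_T S (key n).1)) hz
    rw [Filter.eventually_atTop]
    exact ⟨n, fun m hm => hnested n m hm (hxmem m)⟩
  obtain ⟨β, hβ⟩ := chain_to_branch (τ := τ) (fun n => (key n).2.1) (fun n => (key n).2.2)
  refine ⟨z, ⟨β, fun n => ?_, fun n => ?_⟩, ?_⟩
  · rw [hβ]; exact (key n).1
  · rw [hβ]; exact hzmem n
  · have := hzmem ω.length
    rw [htake ω.length le_rfl, List.take_length] at this
    exact this

/-- level sets are finite -/
lemma level_finite (n : ℕ) : {ω | ω ∈ Tsub S ∧ ω.length = n}.Finite := by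
  induction n with
  | zero =>
    apply Set.Finite.subset (Set.finite_singleton ([] : List ℕ))
    rintro ω ⟨_, hlen⟩
    exact List.length_eq_zero_iff.1 hlen
  | succ n ih =>
    apply Set.Finite.subset
      (Set.Finite.biUnion ih (fun ω _ => ((childrenF S ω : Finset ℕ) : Set ℕ).toFinite.image
        (fun a => ω ++ [a])))
    rintro τ ⟨hτ, hlen⟩
    have hne : τ ≠ [] := by
      intro h0; rw [h0] at hlen; simp at hlen
    obtain ⟨ω, a, rfl⟩ : ∃ ω a, τ = ω ++ [a] := by
      exact ⟨τ.dropLast, τ.getLast hne, (List.dropLast_append_getLast hne).symm⟩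
    have hω : ω ∈ Tsub S := prefix_step S hτ
    refine Set.mem_biUnion ⟨hω, by
      rw [List.length_append, List.length_singleton] at hlen; omega⟩ ?_
    exact ⟨a, (mem_childrenF S hω).2 hτ, rfl⟩

lemma X_eq_iInter : Xs S = ⋂ n, ⋃ ω ∈ {ω | ω ∈ Tsub S ∧ ω.length = n}, S.P ω := by
  apply Set.eq_of_subset_of_subset
  · rintro z ⟨β, hβ1, hβ2⟩
    apply Set.mem_iInter.2
    intro n
    exact Set.mem_biUnion ⟨hβ1 n, pre_length β n⟩ (hβ2 n)
  · intro z hz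
    rw [Set.mem_iInter] at hz
    have hlev : ∀ n, ∃ ω, (ω ∈ Tsub S ∧ ω.length = n) ∧ z ∈ S.P ω := by
      intro n
      obtain ⟨ω, hω, hmem⟩ := Set.mem_iUnion₂.1 (hz n)
      exact ⟨ω, hω, hmem⟩
    choose ω hω hmem using hlev
    have hchain : ∀ n, ∃ a, ω (n+1) = ω n ++ [a] := by
      intro n
      have hne : ω (n+1) ≠ [] := by
        intro h0
        have := (hω (n+1)).2
        rw [h0] at this; simp at this
      obtain ⟨ρ, a, hρ⟩ : ∃ ρ a, ω (n+1) = ρ ++ [a] :=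
        ⟨(ω (n+1)).dropLast, (ω (n+1)).getLast hne, (List.dropLast_append_getLast hne).symm⟩
      have hρsub : ρ ∈ Tsub S := prefix_step S (by rw [← hρ]; exact (hω (n+1)).1)
      have hzρ : z ∈ S.P ρ := by
        have h1 : ω (n+1) ∈ S.T := Tsub_subset_T S (hω (n+1)).1
        have h2 : ρ <+: ω (n+1) := by rw [hρ]; exact List.prefix_append _ _
        exact S.hnest ρ (Tsub_subset_T S hρsub) (ω (n+1)) h1 h2 (hmem (n+1))
      have hρlen : ρ.length = n := by
        have := (hω (n+1)).2
        rw [hρ, List.length_append, List.length_singleton] at this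
        omega
      have : ω n = ρ := cell_unique S (Tsub_subset_T S (hω n).1) (Tsub_subset_T S hρsub)
        (by rw [(hω n).2, hρlen]) ⟨z, hmem n, hzρ⟩
      exact ⟨a, by rw [hρ, this]⟩
    obtain ⟨β, hβ⟩ := chain_to_branch ω (fun n => (hω n).2) hchain
    exact ⟨β, fun n => by rw [hβ]; exact (hω n).1, fun n => by rw [hβ]; exact hmem n⟩

lemma X_closed : IsClosed (Xs S) := by
  rw [X_eq_iInter]
  apply isClosed_iInter
  intro n
  exact Set.Finite.isClosed_biUnion (level_finite S n)
    (fun ω hω => S.hclosed ω (Tsub_subset_T S hω.1))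

lemma X_subset_P_nil : Xs S ⊆ S.P [] := by
  rintro z ⟨β, _, hβ2⟩
  have := hβ2 0
  rw [pre_zero] at this
  exact this

lemma X_totallyBounded : TotallyBounded (Xs S) := by
  rw [Metric.totallyBounded_iff]
  intro ε hε
  obtain ⟨n, hn⟩ : ∃ n, S.lam ^ n * dm S [] < ε := by
    have hd : 0 < dm S [] := dm_pos S S.hroot
    obtain ⟨n, hn⟩ := exists_pow_lt_of_lt_one (div_pos hε hd) S.hlam1
    exact ⟨n, by rw [← lt_div_iff₀ hd]; exact hn⟩
  classical
  have hz0 : (S.P []).Nonempty := cellP_nonempty S S.hroot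
  obtain ⟨z0, _⟩ := hz0
  let f : List ℕ → Z := fun ω => if h : ω ∈ S.T then (cellP_nonempty S h).choose else z0
  refine ⟨f '' {ω | ω ∈ Tsub S ∧ ω.length = n}, (level_finite S n).image f, ?_⟩
  rintro z ⟨β, hβ1, hβ2⟩
  have hωT : pre β n ∈ S.T := Tsub_subset_T S (hβ1 n)
  have hfmem : f (pre β n) ∈ S.P (pre β n) := by
    simp only [f, dif_pos hωT]
    exact (cellP_nonempty S hωT).choose_spec
  have hmemlev : pre β n ∈ {ω | ω ∈ Tsub S ∧ ω.length = n} := ⟨hβ1 n, pre_length β n⟩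
  apply Set.mem_biUnion (Set.mem_image_of_mem f hmemlev)
  rw [Metric.mem_ball]
  calc dist z (f (pre β n)) ≤ dm S (pre β n) :=
        Metric.dist_le_diam_of_mem (cell_bounded S hωT) (hβ2 n) hfmem
    _ ≤ S.lam ^ (pre β n).length * dm S [] := dm_le_level S (hβ1 n)
    _ = S.lam ^ n * dm S [] := by rw [pre_length]
    _ < ε := hn

lemma X_compact : IsCompact (Xs S) :=
  TotallyBounded.isCompact_of_isClosed (X_totallyBounded S) (X_closed S)

/-- each cell is relatively open in the limit set -/
lemma cell_relOpen {ω : List ℕ} (hω : ω ∈ Tsub S) :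
    ∃ V : Set Z, IsOpen V ∧ Xs S ∩ V = Xs S ∩ S.P ω := by
  refine ⟨⋃ x ∈ Xs S ∩ S.P ω, Metric.ball x (S.kap * dm S ω), isOpen_biUnion
    (fun _ _ => Metric.isOpen_ball), ?_⟩
  apply Set.eq_of_subset_of_subset
  · rintro y ⟨hy, hyV⟩
    obtain ⟨x, hx, hxy⟩ := Set.mem_iUnion₂.1 hyV
    refine ⟨hy, ?_⟩
    by_contra hyP
    obtain ⟨βx, hβx1, hβx2⟩ := hx.1
    have hωeq : ω = pre βx ω.length := branch_eq S hβx1 hβx2 hω hx.2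
    have := branch_sep S hβx1 hβx2 ω.length (q := y) (by rw [← hωeq]; exact hyP)
    rw [← hωeq] at this
    rw [Metric.mem_ball, dist_comm] at hxy
    linarith
  · rintro y ⟨hy, hyP⟩
    refine ⟨hy, Set.mem_biUnion ⟨hy, hyP⟩ ?_⟩
    rw [Metric.mem_ball, dist_self]
    exact mul_pos S.hkap (dm_pos S (Tsub_subset_T S hω))


/-! ### children decomposition of cells -/

lemma cell_children_cover {ω : List ℕ} (hω : ω ∈ Tsub S) :
    Xs S ∩ S.P ω = ⋃ a ∈ childrenF S ω, (Xs S ∩ S.P (ω ++ [a])) := by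
  apply Set.eq_of_subset_of_subset
  · rintro x ⟨hx, hxP⟩
    obtain ⟨β, hβ1, hβ2⟩ := hx
    have hωeq : ω = pre β ω.length := branch_eq S hβ1 hβ2 hω hxP
    have hchild : pre β (ω.length + 1) = ω ++ [β ω.length] := by
      rw [pre_succ, ← hωeq]
    have hmem : ω ++ [β ω.length] ∈ Tsub S := by
      rw [← hchild]; exact hβ1 _
    refine Set.mem_biUnion ((mem_childrenF S hω).2 hmem) ⟨⟨β, hβ1, hβ2⟩, ?_⟩
    rw [← hchild]
    exact hβ2 _
  · intro x hx
    obtain ⟨a, ha, hmem⟩ := Set.mem_iUnion₂.1 hx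
    have haT : ω ++ [a] ∈ Tsub S := (mem_childrenF S hω).1 ha
    exact ⟨hmem.1, S.hnest ω (Tsub_subset_T S hω) _ (Tsub_subset_T S haT)
      (List.prefix_append _ _) hmem.2⟩

/-- depth-`k` descendants -/
noncomputable def desc : ℕ → List ℕ → Finset (List ℕ)
  | 0, ω => {ω}
  | k+1, ω => (childrenF S ω).biUnion (fun a => desc k (ω ++ [a]))

lemma desc_mem (k : ℕ) : ∀ {ω : List ℕ}, ω ∈ Tsub S → ∀ τ ∈ desc S k ω,
    τ ∈ Tsub S ∧ ω <+: τ ∧ dm S τ ≤ S.lam ^ k * dm S ω := by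
  induction k with
  | zero =>
    intro ω hω τ hτ
    rw [desc, Finset.mem_singleton] at hτ
    subst hτ
    exact ⟨hω, List.prefix_rfl, by simp⟩
  | succ k ih =>
    intro ω hω τ hτ
    rw [desc, Finset.mem_biUnion] at hτ
    obtain ⟨a, ha, hτ⟩ := hτ
    have haT : ω ++ [a] ∈ Tsub S := (mem_childrenF S hω).1 ha
    obtain ⟨h1, h2, h3⟩ := ih haT τ hτ
    refine ⟨h1, (List.prefix_append _ _).trans h2, ?_⟩
    calc dm S τ ≤ S.lam ^ k * dm S (ω ++ [a]) := h3
      _ ≤ S.lam ^ k * (S.lam * dm S ω) := by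
          apply mul_le_mul_of_nonneg_left
            (dm_child_le S (Tsub_subset_T S hω) (Tsub_subset_T S haT))
            (pow_nonneg S.hlam0.le k)
      _ = S.lam ^ (k+1) * dm S ω := by ring

omit [MetricSpace Z] in
lemma desc_pairwise {ω : List ℕ} {a b : ℕ} (hab : a ≠ b) {τ : List ℕ}
    (ha : ω ++ [a] <+: τ) (hb : ω ++ [b] <+: τ) : False := by
  have h1 : ω ++ [a] <+: ω ++ [b] := List.prefix_of_prefix_length_le ha hb (by simp)
  have h2 : ω ++ [a] = ω ++ [b] := h1.eq_of_length (by simp)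
  have h3 := List.append_cancel_left h2
  injection h3 with h4
  exact hab h4

lemma desc_sum (k : ℕ) : ∀ {ω : List ℕ}, ω ∈ Tsub S →
    ∑ τ ∈ desc S k ω, mass S τ = mass S ω := by
  induction k with
  | zero =>
    intro ω hω
    rw [desc, Finset.sum_singleton]
  | succ k ih =>
    intro ω hω
    rw [desc]
    rw [Finset.sum_biUnion]
    · rw [Finset.sum_congr rfl (fun a ha => ih ((mem_childrenF S hω).1 ha))]
      exact mass_additive S hω
    · intro a ha b hb hab
      simp only [Finset.disjoint_left]
      intro τ hτa hτb
      have h1 := (desc_mem S k ((mem_childrenF S hω).1 ha) τ hτa).2.1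
      have h2 := (desc_mem S k ((mem_childrenF S hω).1 hb) τ hτb).2.1
      exact desc_pairwise hab h1 h2

lemma desc_cover (k : ℕ) : ∀ {ω : List ℕ}, ω ∈ Tsub S →
    Xs S ∩ S.P ω = ⋃ τ ∈ desc S k ω, (Xs S ∩ S.P τ) := by
  induction k with
  | zero =>
    intro ω hω
    rw [desc]
    simp
  | succ k ih =>
    intro ω hω
    rw [desc, cell_children_cover S hω]
    apply Set.eq_of_subset_of_subset
    · intro x hx
      obtain ⟨a, ha, hmem⟩ := Set.mem_iUnion₂.1 hx
      rw [ih ((mem_childrenF S hω).1 ha)] at hmem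
      obtain ⟨τ, hτ, hx'⟩ := Set.mem_iUnion₂.1 hmem
      exact Set.mem_biUnion (Finset.mem_biUnion.2 ⟨a, ha, hτ⟩) hx'
    · intro x hx
      obtain ⟨τ, hτ, hx'⟩ := Set.mem_iUnion₂.1 hx
      obtain ⟨a, ha, hτ'⟩ := Finset.mem_biUnion.1 hτ
      apply Set.mem_biUnion ha
      rw [ih ((mem_childrenF S hω).1 ha)]
      exact Set.mem_biUnion hτ' hx'

/-! ### the outer measure -/

noncomputable def cfun : Set Z → ℝ≥0∞ := fun E =>
  if E ∩ Xs S = ∅ then 0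
  else ⨅ ω : {ω : List ℕ // ω ∈ Tsub S ∧ Xs S ∩ S.P ω = E}, ENNReal.ofReal (mass S ω.1)

lemma cfun_empty : cfun S ∅ = 0 := by
  unfold cfun
  rw [if_pos (by simp)]

noncomputable def outer : OuterMeasure Z :=
  MeasureTheory.OuterMeasure.ofFunction (cfun S) (cfun_empty S)

lemma cfun_cell_le {ω : List ℕ} (hω : ω ∈ Tsub S) :
    cfun S (Xs S ∩ S.P ω) ≤ ENNReal.ofReal (mass S ω) := by
  unfold cfun
  rw [if_neg]
  · exact iInf_le (fun τ : {τ : List ℕ // τ ∈ Tsub S ∧ Xs S ∩ S.P τ = Xs S ∩ S.P ω} =>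
      ENNReal.ofReal (mass S τ.1)) ⟨ω, hω, rfl⟩
  · obtain ⟨z, hz1, hz2⟩ := cell_nonempty S hω
    exact fun h => Set.eq_empty_iff_forall_notMem.1 h z ⟨⟨hz1, hz2⟩, hz1⟩

lemma outer_cell_le {ω : List ℕ} (hω : ω ∈ Tsub S) :
    outer S (Xs S ∩ S.P ω) ≤ ENNReal.ofReal (mass S ω) :=
  le_trans (MeasureTheory.OuterMeasure.ofFunction_le _) (cfun_cell_le S hω)

lemma cfun_null {E : Set Z} (h : E ∩ Xs S = ∅) : cfun S E = 0 := by
  unfold cfun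
  rw [if_pos h]

lemma outer_null {E : Set Z} (h : E ∩ Xs S = ∅) : outer S E = 0 :=
  le_antisymm (le_trans (MeasureTheory.OuterMeasure.ofFunction_le _)
    (le_of_eq (cfun_null S h))) zero_le

/-! ### the combinatorial covering bound -/

lemma prefix_letter {ω τ : List ℕ} (h : ω <+: τ) (hne : τ ≠ ω) :
    ω ++ [τ.getD ω.length 0] <+: τ ∧ ∀ b, ω ++ [b] <+: τ → b = τ.getD ω.length 0 := by
  obtain ⟨t, rfl⟩ := h
  have htne : t ≠ [] := by
    rintro rfl
    exact hne (List.append_nil ω)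
  obtain ⟨b, t', rfl⟩ : ∃ b t', t = b :: t' := by
    cases t with
    | nil => exact absurd rfl htne
    | cons b t' => exact ⟨b, t', rfl⟩
  have hgetD : (ω ++ b :: t').getD ω.length 0 = b := by
    rw [List.getD_append_right _ _ _ _ le_rfl]
    simp
  rw [hgetD]
  constructor
  · exact ⟨t', by simp⟩
  · intro c hc
    obtain ⟨u, hu⟩ := hc
    rw [List.append_assoc] at hu
    have := List.append_cancel_left hu
    injection this

lemma cover_sum (k : ℕ) : ∀ ω, ω ∈ Tsub S → ∀ (F : Finset ℕ) (g : ℕ → List ℕ),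
    (∀ n ∈ F, g n ∈ Tsub S) → (∀ n ∈ F, ω <+: g n) → (∀ n ∈ F, (g n).length ≤ ω.length + k) →
    (Xs S ∩ S.P ω ⊆ ⋃ n ∈ F, (Xs S ∩ S.P (g n))) →
    mass S ω ≤ ∑ n ∈ F, mass S (g n) := by
  induction k with
  | zero =>
    intro ω hω F g hg1 hg2 hg3 hcov
    obtain ⟨z, hz1, hz2⟩ := cell_nonempty S hω
    obtain ⟨n, hn, _⟩ := Set.mem_iUnion₂.1 (hcov ⟨hz1, hz2⟩)
    have heq : g n = ω := ((hg2 n hn).eq_of_length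
      (le_antisymm ((hg2 n hn).length_le) (by have := hg3 n hn; omega))).symm
    calc mass S ω = mass S (g n) := by rw [heq]
      _ ≤ ∑ m ∈ F, mass S (g m) :=
          Finset.single_le_sum (fun m _ => mass_nonneg S (g m)) hn
  | succ k ih =>
    intro ω hω F g hg1 hg2 hg3 hcov
    by_cases hex : ∃ n ∈ F, g n = ω
    · obtain ⟨n, hn, hgn⟩ := hex
      calc mass S ω = mass S (g n) := by rw [hgn]
        _ ≤ ∑ m ∈ F, mass S (g m) :=
            Finset.single_le_sum (fun m _ => mass_nonneg S (g m)) hn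
    · push_neg at hex
      -- every g n strictly extends ω through some child
      have hchild : ∀ a ∈ childrenF S ω,
          Xs S ∩ S.P (ω ++ [a]) ⊆
            ⋃ n ∈ F.filter (fun n => (g n).getD ω.length 0 = a), (Xs S ∩ S.P (g n)) := by
        intro a ha x hx
        have haT : ω ++ [a] ∈ Tsub S := (mem_childrenF S hω).1 ha
        have hxω : x ∈ Xs S ∩ S.P ω := ⟨hx.1, S.hnest ω (Tsub_subset_T S hω) _
          (Tsub_subset_T S haT) (List.prefix_append _ _) hx.2⟩
        obtain ⟨n, hn, hxn⟩ := Set.mem_iUnion₂.1 (hcov hxω)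
        obtain ⟨β, hβ1, hβ2⟩ := hx.1
        have he1 : ω ++ [a] = pre β (ω ++ [a]).length := branch_eq S hβ1 hβ2 haT hx.2
        have he2 : g n = pre β (g n).length := branch_eq S hβ1 hβ2 (hg1 n hn) hxn.2
        have hlen : (ω ++ [a]).length ≤ (g n).length := by
          have h1 := (hg2 n hn).length_le
          have h2 : (g n).length ≠ ω.length := by
            intro hl
            exact hex n hn ((hg2 n hn).eq_of_length hl.symm).symm
          simp only [List.length_append, List.length_singleton]
          omega
        have hpre : ω ++ [a] <+: g n := by
          rw [he1, he2]
          exact pre_prefix β hlen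
        have hget : (g n).getD ω.length 0 = a :=
          ((prefix_letter (hg2 n hn) (hex n hn)).2 a hpre).symm
        exact Set.mem_biUnion (Finset.mem_filter.2 ⟨hn, hget⟩) hxn
      have hmain : ∀ a ∈ childrenF S ω,
          mass S (ω ++ [a]) ≤
            ∑ n ∈ F.filter (fun n => (g n).getD ω.length 0 = a), mass S (g n) := by
        intro a ha
        have haT : ω ++ [a] ∈ Tsub S := (mem_childrenF S hω).1 ha
        apply ih (ω ++ [a]) haT _ g
        · intro n hn
          exact hg1 n (Finset.mem_filter.1 hn).1
        · intro n hn
          obtain ⟨hn', hget⟩ := Finset.mem_filter.1 hn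
          have := (prefix_letter (hg2 n hn') (hex n hn')).1
          rw [hget] at this
          exact this
        · intro n hn
          have := hg3 n (Finset.mem_filter.1 hn).1
          simp only [List.length_append, List.length_singleton]
          omega
        · exact hchild a ha
      calc mass S ω = ∑ a ∈ childrenF S ω, mass S (ω ++ [a]) := (mass_additive S hω).symm
        _ ≤ ∑ a ∈ childrenF S ω,
              ∑ n ∈ F.filter (fun n => (g n).getD ω.length 0 = a), mass S (g n) :=
            Finset.sum_le_sum hmain
        _ ≤ ∑ n ∈ F, mass S (g n) := by
            have h1 : ∀ a ∈ childrenF S ω,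
                (∑ n ∈ F.filter (fun n => (g n).getD ω.length 0 = a), mass S (g n))
                = ∑ n ∈ F, if (g n).getD ω.length 0 = a then mass S (g n) else 0 :=
              fun a _ => Finset.sum_filter _ _
            rw [Finset.sum_congr rfl h1, Finset.sum_comm]
            apply Finset.sum_le_sum
            intro n hn
            rw [Finset.sum_ite_eq (childrenF S ω) ((g n).getD ω.length 0)
              (fun _ => mass S (g n))]
            split
            · exact le_rfl
            · exact mass_nonneg S (g n)


lemma cover_sum' {ω : List ℕ} (hω : ω ∈ Tsub S) (F : Finset ℕ) (g : ℕ → List ℕ)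
    (hg1 : ∀ n ∈ F, g n ∈ Tsub S)
    (hcov : Xs S ∩ S.P ω ⊆ ⋃ n ∈ F, (Xs S ∩ S.P (g n))) :
    mass S ω ≤ ∑ n ∈ F, mass S (g n) := by
  by_cases hex : ∃ n ∈ F, g n <+: ω
  · obtain ⟨n, hn, hpre⟩ := hex
    calc mass S ω ≤ mass S (g n) := mass_le_of_prefix S hω hpre
      _ ≤ ∑ m ∈ F, mass S (g m) :=
          Finset.single_le_sum (fun m _ => mass_nonneg S (g m)) hn
  · push_neg at hex
    set F' := F.filter (fun n => ω <+: g n) with hF'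
    have hcov' : Xs S ∩ S.P ω ⊆ ⋃ n ∈ F', (Xs S ∩ S.P (g n)) := by
      intro x hx
      obtain ⟨n, hn, hxn⟩ := Set.mem_iUnion₂.1 (hcov hx)
      obtain ⟨β, hβ1, hβ2⟩ := hx.1
      have he1 : ω = pre β ω.length := branch_eq S hβ1 hβ2 hω hx.2
      have he2 : g n = pre β (g n).length := branch_eq S hβ1 hβ2 (hg1 n hn) hxn.2
      have hcomp : ω <+: g n := by
        rcases le_or_gt ω.length (g n).length with hl | hl
        · rw [he1, he2]; exact pre_prefix β hl
        · exfalso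
          apply hex n hn
          rw [he1, he2]; exact pre_prefix β hl.le
      exact Set.mem_biUnion (Finset.mem_filter.2 ⟨hn, hcomp⟩) hxn
    have hk : ∀ n ∈ F', (g n).length ≤ ω.length + (F.sup (fun n => (g n).length)) := by
      intro n hn
      have : (g n).length ≤ F.sup (fun n => (g n).length) :=
        Finset.le_sup (f := fun n => (g n).length) (Finset.mem_filter.1 hn).1
      omega
    calc mass S ω ≤ ∑ n ∈ F', mass S (g n) :=
        cover_sum S (F.sup (fun n => (g n).length)) ω hω F' g
          (fun n hn => hg1 n (Finset.mem_filter.1 hn).1)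
          (fun n hn => (Finset.mem_filter.1 hn).2) hk hcov'
      _ ≤ ∑ n ∈ F, mass S (g n) :=
        Finset.sum_le_sum_of_subset_of_nonneg (Finset.filter_subset _ _)
          (fun n _ _ => mass_nonneg S (g n))

lemma outer_cell_ge {ω : List ℕ} (hω : ω ∈ Tsub S) :
    ENNReal.ofReal (mass S ω) ≤ outer S (Xs S ∩ S.P ω) := by
  unfold outer
  rw [MeasureTheory.OuterMeasure.ofFunction_apply]
  refine le_iInf fun f => le_iInf fun hcov => ?_
  apply ENNReal.le_of_forall_pos_le_add
  intro ε hε htop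
  obtain ⟨δ, hδpos, hδsum⟩ := ENNReal.exists_pos_sum_of_countable
    (ENNReal.coe_ne_zero.2 hε.ne') ℕ
  -- choose approximating cells
  have hch : ∀ n, ∃ τ : List ℕ, (f n ∩ Xs S ≠ ∅ →
      τ ∈ Tsub S ∧ Xs S ∩ S.P τ = f n ∧
        ENNReal.ofReal (mass S τ) ≤ cfun S (f n) + δ n) := by
    intro n
    by_cases hgood : f n ∩ Xs S = ∅
    · exact ⟨[], fun h => absurd hgood h⟩
    · have hlt : cfun S (f n) < cfun S (f n) + δ n := by
        apply ENNReal.lt_add_right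
        · exact ne_top_of_le_ne_top htop.ne (le_trans (ENNReal.le_tsum n) le_rfl)
        · exact ENNReal.coe_ne_zero.2 (hδpos n).ne'
      have hcf : cfun S (f n) = ⨅ τ : {τ : List ℕ // τ ∈ Tsub S ∧ Xs S ∩ S.P τ = f n},
          ENNReal.ofReal (mass S τ.1) := by
        unfold cfun
        rw [if_neg hgood]
      rw [hcf] at hlt
      obtain ⟨⟨τ, hτ1, hτ2⟩, hτ3⟩ := iInf_lt_iff.1 hlt
      exact ⟨τ, fun _ => ⟨hτ1, hτ2, by rw [hcf]; exact hτ3.le⟩⟩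
  choose g hg using hch
  -- relatively open supersets of the chosen cells
  have hV : ∀ n, ∃ V : Set Z, IsOpen V ∧ (f n ∩ Xs S ≠ ∅ →
      Xs S ∩ V = Xs S ∩ S.P (g n)) ∧ (f n ∩ Xs S = ∅ → V = ∅) := by
    intro n
    by_cases hgood : f n ∩ Xs S = ∅
    · exact ⟨∅, isOpen_empty, fun h => absurd hgood h, fun _ => rfl⟩
    · obtain ⟨V, hV1, hV2⟩ := cell_relOpen S ((hg n hgood).1)
      exact ⟨V, hV1, fun _ => hV2, fun h => absurd h hgood⟩
  choose V hVopen hVeq hVbad using hV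
  -- compactness
  have hK : IsCompact (Xs S ∩ S.P ω) :=
    (X_compact S).of_isClosed_subset
      ((X_closed S).inter (S.hclosed ω (Tsub_subset_T S hω))) Set.inter_subset_left
  have hKV : Xs S ∩ S.P ω ⊆ ⋃ n, V n := by
    intro x hx
    obtain ⟨n, hn⟩ := Set.mem_iUnion.1 (hcov hx)
    have hgood : f n ∩ Xs S ≠ ∅ := fun h => Set.eq_empty_iff_forall_notMem.1 h x ⟨hn, hx.1⟩
    have hx1 : x ∈ Xs S ∩ S.P (g n) := by
      rw [(hg n hgood).2.1]
      exact hn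
    have hx2 : x ∈ Xs S ∩ V n := by
      rw [hVeq n hgood]
      exact hx1
    exact Set.mem_iUnion.2 ⟨n, hx2.2⟩
  obtain ⟨Fs, hFs⟩ := hK.elim_finite_subcover V hVopen hKV
  set Fg := Fs.filter (fun n => f n ∩ Xs S ≠ ∅) with hFg
  have hcov2 : Xs S ∩ S.P ω ⊆ ⋃ n ∈ Fg, (Xs S ∩ S.P (g n)) := by
    intro x hx
    obtain ⟨n, hn, hxV⟩ := Set.mem_iUnion₂.1 (hFs hx)
    by_cases hgood : f n ∩ Xs S = ∅
    · rw [hVbad n hgood] at hxV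
      exact absurd hxV (Set.notMem_empty x)
    · have hx1 : x ∈ Xs S ∩ S.P (g n) := by
        rw [← hVeq n hgood]
        exact ⟨hx.1, hxV⟩
      exact Set.mem_biUnion (Finset.mem_filter.2 ⟨hn, hgood⟩) hx1
  have hsum := cover_sum' S hω Fg g (fun n hn => (hg n (Finset.mem_filter.1 hn).2).1) hcov2
  calc ENNReal.ofReal (mass S ω)
      ≤ ENNReal.ofReal (∑ n ∈ Fg, mass S (g n)) := ENNReal.ofReal_le_ofReal hsum
    _ = ∑ n ∈ Fg, ENNReal.ofReal (mass S (g n)) :=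
        ENNReal.ofReal_sum_of_nonneg (fun n _ => mass_nonneg S (g n))
    _ ≤ ∑ n ∈ Fg, (cfun S (f n) + δ n) :=
        Finset.sum_le_sum (fun n hn => (hg n (Finset.mem_filter.1 hn).2).2.2)
    _ = (∑ n ∈ Fg, cfun S (f n)) + ∑ n ∈ Fg, (δ n : ℝ≥0∞) := Finset.sum_add_distrib
    _ ≤ (∑' n, cfun S (f n)) + ↑ε :=
        add_le_add (ENNReal.sum_le_tsum Fg) (le_trans (ENNReal.sum_le_tsum Fg) hδsum.le)


lemma edist_le_cell {τ : List ℕ} (hτ : τ ∈ S.T) {x y : Z} (hx : x ∈ S.P τ) (hy : y ∈ S.P τ) :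
    edist x y ≤ ENNReal.ofReal (dm S τ) := by
  rw [edist_dist]
  exact ENNReal.ofReal_le_ofReal (Metric.dist_le_diam_of_mem (cell_bounded S hτ) hx hy)

lemma outer_isMetric : (outer S).IsMetric := by
  intro sA sB hsep
  apply le_antisymm
  · exact measure_union_le (μ := outer S) sA sB
  · -- superadditivity on separated sets
    obtain ⟨r, hr0, hrsep⟩ := hsep
    obtain ⟨r', hr'pos, hr'le⟩ : ∃ r' : ℝ, 0 < r' ∧ ENNReal.ofReal r' ≤ r := by
      rcases eq_or_ne r ⊤ with rfl | hrt
      · exact ⟨1, one_pos, le_top⟩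
      · refine ⟨r.toReal, ?_, by rw [ENNReal.ofReal_toReal hrt]⟩
        exact ENNReal.toReal_pos hr0 hrt
    conv_rhs => rw [outer, MeasureTheory.OuterMeasure.ofFunction_apply]
    refine le_iInf fun f => le_iInf fun hcov => ?_
    apply ENNReal.le_of_forall_pos_le_add
    intro ε hε htop
    obtain ⟨δ, hδpos, hδsum⟩ := ENNReal.exists_pos_sum_of_countable
      (ENNReal.coe_ne_zero.2 hε.ne') ℕ
    -- approximate each covering set by a cell
    have hch : ∀ n, ∃ τ : List ℕ, (f n ∩ Xs S ≠ ∅ →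
        τ ∈ Tsub S ∧ Xs S ∩ S.P τ = f n ∧
          ENNReal.ofReal (mass S τ) ≤ cfun S (f n) + δ n) := by
      intro n
      by_cases hgood : f n ∩ Xs S = ∅
      · exact ⟨[], fun h => absurd hgood h⟩
      · have hlt : cfun S (f n) < cfun S (f n) + δ n := by
          apply ENNReal.lt_add_right
          · exact ne_top_of_le_ne_top htop.ne (ENNReal.le_tsum n)
          · exact ENNReal.coe_ne_zero.2 (hδpos n).ne'
        have hcf : cfun S (f n) = ⨅ τ : {τ : List ℕ // τ ∈ Tsub S ∧ Xs S ∩ S.P τ = f n},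
            ENNReal.ofReal (mass S τ.1) := by
          unfold cfun
          rw [if_neg hgood]
        rw [hcf] at hlt
        obtain ⟨⟨τ, hτ1, hτ2⟩, hτ3⟩ := iInf_lt_iff.1 hlt
        exact ⟨τ, fun _ => ⟨hτ1, hτ2, by rw [hcf]; exact hτ3.le⟩⟩
    choose g hg using hch
    -- refine each cell to depth where diameters are < r'
    have hk : ∀ n, ∃ k : ℕ, S.lam ^ k * dm S (g n) < r' := by
      intro n
      rcases le_or_gt (dm S (g n)) 0 with hd | hd
      · exact ⟨0, by nlinarith⟩
      · obtain ⟨k, hk⟩ := exists_pow_lt_of_lt_one (div_pos hr'pos hd) S.hlam1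
        exact ⟨k, by rw [← lt_div_iff₀ hd]; exact hk⟩
    choose k hkspec using hk
    -- the two halves of the refined cells
    classical
    set DA : ℕ → Finset (List ℕ) := fun n =>
      (desc S (k n) (g n)).filter (fun τ => (Xs S ∩ S.P τ ∩ sA).Nonempty) with hDA
    set DB : ℕ → Finset (List ℕ) := fun n =>
      (desc S (k n) (g n)).filter (fun τ => (Xs S ∩ S.P τ ∩ sB).Nonempty) with hDB
    set A : ℕ → ℝ≥0∞ := fun n =>
      if f n ∩ Xs S = ∅ then 0 else ∑ τ ∈ DA n, ENNReal.ofReal (mass S τ) with hA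
    set B : ℕ → ℝ≥0∞ := fun n =>
      if f n ∩ Xs S = ∅ then 0 else ∑ τ ∈ DB n, ENNReal.ofReal (mass S τ) with hB
    have houterA : outer S sA ≤ ∑' n, A n := by
      have hsub : sA ⊆ ⋃ n, (sA ∩ f n) := by
        intro x hx
        obtain ⟨n, hn⟩ := Set.mem_iUnion.1 (hcov (Set.mem_union_left _ hx))
        exact Set.mem_iUnion.2 ⟨n, hx, hn⟩
      calc outer S sA ≤ outer S (⋃ n, (sA ∩ f n)) := measure_mono hsub
        _ ≤ ∑' n, outer S (sA ∩ f n) := measure_iUnion_le _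
        _ ≤ ∑' n, A n := by
            apply ENNReal.tsum_le_tsum
            intro n
            by_cases hgood : f n ∩ Xs S = ∅
            · rw [hA]
              simp only [if_pos hgood]
              have : (sA ∩ f n) ∩ Xs S = ∅ := by
                rw [Set.eq_empty_iff_forall_notMem]
                rintro x ⟨⟨_, hx2⟩, hx3⟩
                exact Set.eq_empty_iff_forall_notMem.1 hgood x ⟨hx2, hx3⟩
              rw [outer_null S this]
            · have hcell : sA ∩ f n ⊆ ⋃ τ ∈ DA n, (Xs S ∩ S.P τ) := by
                intro x hx
                have hxf : x ∈ Xs S ∩ S.P (g n) := by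
                  rw [(hg n hgood).2.1]
                  exact hx.2
                rw [desc_cover S (k n) (hg n hgood).1] at hxf
                obtain ⟨τ, hτ, hxτ⟩ := Set.mem_iUnion₂.1 hxf
                refine Set.mem_biUnion (Finset.mem_filter.2 ⟨hτ, ⟨x, hxτ, hx.1⟩⟩) hxτ
              calc outer S (sA ∩ f n) ≤ outer S (⋃ τ ∈ DA n, (Xs S ∩ S.P τ)) :=
                    measure_mono hcell
                _ ≤ ∑ τ ∈ DA n, outer S (Xs S ∩ S.P τ) := measure_biUnion_finset_le _ _
                _ ≤ A n := by
                    rw [hA]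
                    simp only [if_neg hgood]
                    apply Finset.sum_le_sum
                    intro τ hτ
                    exact outer_cell_le S
                      (desc_mem S (k n) (hg n hgood).1 τ (Finset.mem_filter.1 hτ).1).1
    have houterB : outer S sB ≤ ∑' n, B n := by
      have hsub : sB ⊆ ⋃ n, (sB ∩ f n) := by
        intro x hx
        obtain ⟨n, hn⟩ := Set.mem_iUnion.1 (hcov (Set.mem_union_right _ hx))
        exact Set.mem_iUnion.2 ⟨n, hx, hn⟩
      calc outer S sB ≤ outer S (⋃ n, (sB ∩ f n)) := measure_mono hsub
        _ ≤ ∑' n, outer S (sB ∩ f n) := measure_iUnion_le _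
        _ ≤ ∑' n, B n := by
            apply ENNReal.tsum_le_tsum
            intro n
            by_cases hgood : f n ∩ Xs S = ∅
            · rw [hB]
              simp only [if_pos hgood]
              have : (sB ∩ f n) ∩ Xs S = ∅ := by
                rw [Set.eq_empty_iff_forall_notMem]
                rintro x ⟨⟨_, hx2⟩, hx3⟩
                exact Set.eq_empty_iff_forall_notMem.1 hgood x ⟨hx2, hx3⟩
              rw [outer_null S this]
            · have hcell : sB ∩ f n ⊆ ⋃ τ ∈ DB n, (Xs S ∩ S.P τ) := by
                intro x hx
                have hxf : x ∈ Xs S ∩ S.P (g n) := by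
                  rw [(hg n hgood).2.1]
                  exact hx.2
                rw [desc_cover S (k n) (hg n hgood).1] at hxf
                obtain ⟨τ, hτ, hxτ⟩ := Set.mem_iUnion₂.1 hxf
                refine Set.mem_biUnion (Finset.mem_filter.2 ⟨hτ, ⟨x, hxτ, hx.1⟩⟩) hxτ
              calc outer S (sB ∩ f n) ≤ outer S (⋃ τ ∈ DB n, (Xs S ∩ S.P τ)) :=
                    measure_mono hcell
                _ ≤ ∑ τ ∈ DB n, outer S (Xs S ∩ S.P τ) := measure_biUnion_finset_le _ _
                _ ≤ B n := by
                    rw [hB]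
                    simp only [if_neg hgood]
                    apply Finset.sum_le_sum
                    intro τ hτ
                    exact outer_cell_le S
                      (desc_mem S (k n) (hg n hgood).1 τ (Finset.mem_filter.1 hτ).1).1
    have hAB : ∀ n, A n + B n ≤ cfun S (f n) + δ n := by
      intro n
      by_cases hgood : f n ∩ Xs S = ∅
      · rw [hA, hB]
        simp only [if_pos hgood]
        simp
      · rw [hA, hB]
        simp only [if_neg hgood]
        have hDdisj : Disjoint (DA n) (DB n) := by
          rw [Finset.disjoint_left]
          intro τ hτA hτB
          obtain ⟨hτ1, x, hxτ, hxA⟩ := Finset.mem_filter.1 hτA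
          obtain ⟨_, y, hyτ, hyB⟩ := Finset.mem_filter.1 hτB
          have hτsub := (desc_mem S (k n) (hg n hgood).1 τ hτ1).1
          have hdm := (desc_mem S (k n) (hg n hgood).1 τ hτ1).2.2
          have h1 : edist x y ≤ ENNReal.ofReal (dm S τ) :=
            edist_le_cell S (Tsub_subset_T S hτsub) hxτ.2 hyτ.2
          have h2 : ENNReal.ofReal (dm S τ) < ENNReal.ofReal r' := by
            apply lt_of_le_of_lt (ENNReal.ofReal_le_ofReal hdm)
            exact (ENNReal.ofReal_lt_ofReal_iff hr'pos).2 (hkspec n)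
          have h3 : r < r :=
            lt_of_le_of_lt (hrsep x hxA y hyB)
              (lt_of_le_of_lt h1 (lt_of_lt_of_le h2 hr'le))
          exact absurd h3 (lt_irrefl r)
        calc (∑ τ ∈ DA n, ENNReal.ofReal (mass S τ)) + ∑ τ ∈ DB n, ENNReal.ofReal (mass S τ)
            = ∑ τ ∈ DA n ∪ DB n, ENNReal.ofReal (mass S τ) := (Finset.sum_union hDdisj).symm
          _ ≤ ∑ τ ∈ desc S (k n) (g n), ENNReal.ofReal (mass S τ) := by
              apply Finset.sum_le_sum_of_subset
              intro τ hτ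
              rcases Finset.mem_union.1 hτ with h | h
              · exact (Finset.mem_filter.1 h).1
              · exact (Finset.mem_filter.1 h).1
          _ = ENNReal.ofReal (∑ τ ∈ desc S (k n) (g n), mass S τ) :=
              (ENNReal.ofReal_sum_of_nonneg (fun τ _ => mass_nonneg S τ)).symm
          _ = ENNReal.ofReal (mass S (g n)) := by rw [desc_sum S (k n) (hg n hgood).1]
          _ ≤ cfun S (f n) + δ n := (hg n hgood).2.2
    calc outer S sA + outer S sB ≤ (∑' n, A n) + (∑' n, B n) := add_le_add houterA houterB
      _ = ∑' n, (A n + B n) := (ENNReal.tsum_add).symm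
      _ ≤ ∑' n, (cfun S (f n) + δ n) := ENNReal.tsum_le_tsum hAB
      _ = (∑' n, cfun S (f n)) + ∑' n, (δ n : ℝ≥0∞) := ENNReal.tsum_add
      _ ≤ (∑' n, cfun S (f n)) + ↑ε := add_le_add le_rfl hδsum.le


/-! ### the measure -/

variable [MeasurableSpace Z] [BorelSpace Z]

noncomputable def mu : Measure Z :=
  (outer S).toMeasure (by
    rw [BorelSpace.measurable_eq (α := Z)]
    exact (outer_isMetric S).borel_le_caratheodory)

lemma mu_apply {E : Set Z} (hE : MeasurableSet E) : mu S E = outer S E :=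
  MeasureTheory.toMeasure_apply _ _ hE

lemma Xs_eq_cell_nil : Xs S ∩ S.P [] = Xs S :=
  Set.inter_eq_self_of_subset_left (X_subset_P_nil S)

lemma mu_finite : IsFiniteMeasure (mu S) := by
  constructor
  rw [mu_apply S MeasurableSet.univ]
  have h1 : (Set.univ : Set Z) ⊆ Xs S ∪ (Set.univ \ Xs S) := by
    intro x _
    by_cases h : x ∈ Xs S
    · exact Or.inl h
    · exact Or.inr ⟨trivial, h⟩
  calc outer S Set.univ ≤ outer S (Xs S ∪ (Set.univ \ Xs S)) := measure_mono h1
    _ ≤ outer S (Xs S) + outer S (Set.univ \ Xs S) := measure_union_le _ _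
    _ ≤ ENNReal.ofReal (mass S []) + 0 := by
        apply add_le_add
        · rw [← Xs_eq_cell_nil S]
          exact outer_cell_le S (root_mem_Tsub S)
        · rw [outer_null S (by rw [Set.eq_empty_iff_forall_notMem]; rintro x ⟨⟨_, h⟩, h2⟩; exact h h2)]
    _ < ⊤ := by
        rw [add_zero]
        exact ENNReal.ofReal_lt_top

lemma exists_small_cell {β : ℕ → ℕ} (hβ1 : ∀ n, pre β n ∈ Tsub S) {r : ℝ} (hr : 0 < r) :
    ∃ n, dm S (pre β n) < r := by
  have hd : 0 < dm S [] := dm_pos S S.hroot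
  obtain ⟨n, hn⟩ := exists_pow_lt_of_lt_one (div_pos hr hd) S.hlam1
  refine ⟨n, ?_⟩
  calc dm S (pre β n) ≤ S.lam ^ (pre β n).length * dm S [] := dm_le_level S (hβ1 n)
    _ = S.lam ^ n * dm S [] := by rw [pre_length]
    _ < r := by rw [← lt_div_iff₀ hd]; exact hn

lemma mu_support_iff (z : Z) :
    z ∈ Xs S ↔ ∀ r : ℝ, 0 < r → 0 < mu S (Metric.ball z r) := by
  constructor
  · rintro hz r hr
    obtain ⟨β, hβ1, hβ2⟩ := hz
    obtain ⟨n, hn⟩ := exists_small_cell S hβ1 hr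
    have hcell : Xs S ∩ S.P (pre β n) ⊆ Metric.ball z r := by
      rintro y ⟨hy1, hy2⟩
      rw [Metric.mem_ball]
      calc dist y z ≤ dm S (pre β n) :=
            Metric.dist_le_diam_of_mem (cell_bounded S (Tsub_subset_T S (hβ1 n)))
              hy2 (hβ2 n)
        _ < r := hn
    rw [mu_apply S measurableSet_ball]
    calc (0:ℝ≥0∞) < ENNReal.ofReal (mass S (pre β n)) := ENNReal.ofReal_pos.2 (hβ1 n)
      _ ≤ outer S (Xs S ∩ S.P (pre β n)) := outer_cell_ge S (hβ1 n)
      _ ≤ outer S (Metric.ball z r) := measure_mono hcell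
  · intro h
    by_contra hz
    have hopen : IsOpen (Xs S)ᶜ := (X_closed S).isOpen_compl
    obtain ⟨r, hr, hball⟩ := Metric.isOpen_iff.1 hopen z hz
    have hnull : Metric.ball z r ∩ Xs S = ∅ := by
      rw [Set.eq_empty_iff_forall_notMem]
      rintro x ⟨hx1, hx2⟩
      exact hball hx1 hx2
    have := h r hr
    rw [mu_apply S measurableSet_ball, outer_null S hnull] at this
    exact lt_irrefl 0 this

lemma kap_le_lam : S.kap ≤ S.lam := by
  obtain ⟨a, ha⟩ := child_exists S (root_mem_Tsub S)
  have h1 := (S.hsep [] S.hroot a (Tsub_subset_T S ha)).2.1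
  have h2 := (S.hsep [] S.hroot a (Tsub_subset_T S ha)).2.2
  have hd := dm_pos S S.hroot
  have : S.kap * dm S [] ≤ S.lam * dm S [] := le_trans h1 h2
  exact (mul_le_mul_iff_left₀ hd).1 this

lemma mu_closedBall_le {z : Z} (hz : z ∈ Xs S) {r : ℝ} (hr : 0 < r) :
    mu S (Metric.closedBall z r) ≤ ENNReal.ofReal ((r / (S.kap * S.kap)) ^ S.s) := by
  obtain ⟨β, hβ1, hβ2⟩ := hz
  -- find the right scale on the branch of z
  have hex : ∃ n, S.kap * dm S (pre β n) ≤ r := by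
    obtain ⟨n, hn⟩ := exists_small_cell S hβ1 (div_pos hr S.hkap)
    exact ⟨n, by rw [mul_comm, ← le_div_iff₀ S.hkap]; exact hn.le⟩
  classical
  set n := Nat.find hex with hn
  have hfind : S.kap * dm S (pre β n) ≤ r := Nat.find_spec hex
  -- the cell at the right scale
  obtain ⟨ω', hω'sub, hω'cover, hω'dm⟩ :
      ∃ ω', ω' ∈ Tsub S ∧ (∀ x ∈ Xs S, dist z x ≤ r → x ∈ S.P ω') ∧
        dm S ω' ≤ r / (S.kap * S.kap) := by
    cases n' : n with
    | zero =>
      refine ⟨[], root_mem_Tsub S, fun x hx _ => X_subset_P_nil S hx, ?_⟩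
      have h0 : S.kap * dm S (pre β 0) ≤ r := by rw [← n']; exact hfind
      rw [pre_zero] at h0
      have hk2 : S.kap * S.kap ≤ S.kap := by nlinarith [kap_le_lam S, S.hlam1, S.hkap]
      rw [le_div_iff₀ (mul_pos S.hkap S.hkap)]
      nlinarith [dm_pos S S.hroot, S.hkap]
    | succ m =>
      have hm : ¬ (S.kap * dm S (pre β m) ≤ r) := Nat.find_min hex (by omega)
      push_neg at hm
      refine ⟨pre β m, hβ1 m, ?_, ?_⟩
      · intro x hx hdist
        by_contra hxP
        obtain ⟨βx, hβx1, hβx2⟩ := hx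
        have := branch_sep S hβ1 hβ2 m (q := x) hxP
        linarith
      · -- dm of child ≥ kap * dm, child has kap * dm child ≤ r
        have hchild : S.kap * dm S (pre β (m+1)) ≤ r := by rw [← n']; exact hfind
        have hlow : S.kap * dm S (pre β m) ≤ dm S (pre β (m+1)) := by
          have h1 : pre β (m+1) ∈ S.T := Tsub_subset_T S (hβ1 (m+1))
          rw [pre_succ] at h1
          have := (S.hsep (pre β m) (Tsub_subset_T S (hβ1 m)) (β m) h1).2.1
          rw [← pre_succ] at this
          exact this
        rw [le_div_iff₀ (mul_pos S.hkap S.hkap)]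
        nlinarith [S.hkap]
  -- conclude
  rw [mu_apply S measurableSet_closedBall]
  have hsplit : Metric.closedBall z r ⊆
      (Xs S ∩ S.P ω') ∪ (Metric.closedBall z r \ Xs S) := by
    intro x hx
    by_cases hxX : x ∈ Xs S
    · exact Or.inl ⟨hxX, hω'cover x hxX (by rw [dist_comm]; exact Metric.mem_closedBall.1 hx)⟩
    · exact Or.inr ⟨hx, hxX⟩
  calc outer S (Metric.closedBall z r)
      ≤ outer S ((Xs S ∩ S.P ω') ∪ (Metric.closedBall z r \ Xs S)) := measure_mono hsplit
    _ ≤ outer S (Xs S ∩ S.P ω') + outer S (Metric.closedBall z r \ Xs S) :=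
        measure_union_le _ _
    _ ≤ ENNReal.ofReal (mass S ω') + 0 := by
        apply add_le_add (outer_cell_le S hω'sub)
        rw [outer_null S (by rw [Set.eq_empty_iff_forall_notMem]; rintro x ⟨⟨_, h⟩, h2⟩; exact h h2)]
    _ ≤ ENNReal.ofReal ((r / (S.kap * S.kap)) ^ S.s) := by
        rw [add_zero]
        apply ENNReal.ofReal_le_ofReal
        calc mass S ω' ≤ dm S ω' ^ S.s := (mass_upper S hω'sub).le
          _ ≤ (r / (S.kap * S.kap)) ^ S.s :=
              Real.rpow_le_rpow Metric.diam_nonneg hω'dm S.hs.le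

lemma mu_closedBall_ge {z : Z} (hz : z ∈ Xs S) {r : ℝ} (hr : 0 < r) (hr1 : r < 1) :
    ENNReal.ofReal ((alph S * min (dm S [] ^ S.s) (S.kap ^ S.s)) * r ^ S.s)
      ≤ mu S (Metric.closedBall z r) := by
  obtain ⟨β, hβ1, hβ2⟩ := hz
  obtain ⟨ω', hω'sub, hω'mass⟩ :
      ∃ ω', ω' ∈ Tsub S ∧ S.P ω' ⊆ Metric.closedBall z r ∧
        (alph S * min (dm S [] ^ S.s) (S.kap ^ S.s)) * r ^ S.s ≤ mass S ω' := by
    have hrs1 : r ^ S.s ≤ 1 := Real.rpow_le_one hr.le hr1.le S.hs.le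
    have hrs0 : 0 < r ^ S.s := Real.rpow_pos_of_pos hr _
    by_cases hcase : dm S [] ≤ r
    · refine ⟨[], root_mem_Tsub S, ?_, ?_⟩
      · intro y hy
        rw [Metric.mem_closedBall]
        calc dist y z ≤ dm S [] :=
              Metric.dist_le_diam_of_mem (cell_bounded S S.hroot) hy
                (by rw [← pre_zero β]; exact hβ2 0)
          _ ≤ r := hcase
      · have h1 := mass_lower S (root_mem_Tsub S)
        have h2 : min (dm S [] ^ S.s) (S.kap ^ S.s) ≤ dm S [] ^ S.s := min_le_left _ _
        have h3 := alph_pos S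
        calc alph S * min (dm S [] ^ S.s) (S.kap ^ S.s) * r ^ S.s
            ≤ alph S * min (dm S [] ^ S.s) (S.kap ^ S.s) * 1 := by
              apply mul_le_mul_of_nonneg_left hrs1
              exact mul_nonneg h3.le (le_min (Real.rpow_nonneg Metric.diam_nonneg _)
                (Real.rpow_nonneg S.hkap.le _))
          _ = alph S * min (dm S [] ^ S.s) (S.kap ^ S.s) := mul_one _
          _ ≤ alph S * (dm S [] ^ S.s) := mul_le_mul_of_nonneg_left h2 h3.le
          _ ≤ mass S [] := h1
    · push_neg at hcase
      have hex : ∃ n, dm S (pre β n) ≤ r := by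
        obtain ⟨n, hn⟩ := exists_small_cell S hβ1 hr
        exact ⟨n, hn.le⟩
      classical
      set n := Nat.find hex with hn
      have hfind : dm S (pre β n) ≤ r := Nat.find_spec hex
      have hn0 : n ≠ 0 := by
        intro h0
        rw [h0, pre_zero] at hfind
        linarith
      obtain ⟨m, hm⟩ : ∃ m, n = m + 1 := ⟨n - 1, by omega⟩
      have hmlt : ¬ (dm S (pre β m) ≤ r) := Nat.find_min hex (by omega)
      push_neg at hmlt
      refine ⟨pre β n, hβ1 n, ?_, ?_⟩
      · intro y hy
        rw [Metric.mem_closedBall]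
        calc dist y z ≤ dm S (pre β n) :=
              Metric.dist_le_diam_of_mem (cell_bounded S (Tsub_subset_T S (hβ1 n)))
                hy (hβ2 n)
          _ ≤ r := hfind
      · have hlow : S.kap * dm S (pre β m) ≤ dm S (pre β n) := by
          rw [hm, pre_succ]
          exact (S.hsep (pre β m) (Tsub_subset_T S (hβ1 m)) (β m)
            (by have := Tsub_subset_T S (hβ1 (m+1)); rwa [pre_succ] at this)).2.1
        have hkr : S.kap * r ≤ dm S (pre β n) := by
          nlinarith [mul_pos S.hkap (sub_pos.2 hmlt)]
        have h1 := mass_lower S (hβ1 n)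
        have h2 : (S.kap * r) ^ S.s ≤ dm S (pre β n) ^ S.s :=
          Real.rpow_le_rpow (mul_nonneg S.hkap.le hr.le) hkr S.hs.le
        have h3 : (S.kap * r) ^ S.s = S.kap ^ S.s * r ^ S.s :=
          Real.mul_rpow S.hkap.le hr.le
        have h4 : min (dm S [] ^ S.s) (S.kap ^ S.s) ≤ S.kap ^ S.s := min_le_right _ _
        have h5 := alph_pos S
        calc alph S * min (dm S [] ^ S.s) (S.kap ^ S.s) * r ^ S.s
            ≤ alph S * S.kap ^ S.s * r ^ S.s := by
              apply mul_le_mul_of_nonneg_right (mul_le_mul_of_nonneg_left h4 h5.le) hrs0.le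
          _ = alph S * ((S.kap * r) ^ S.s) := by rw [h3]; ring
          _ ≤ alph S * dm S (pre β n) ^ S.s := mul_le_mul_of_nonneg_left h2 h5.le
          _ ≤ mass S (pre β n) := h1
  obtain ⟨hω'cover, hω'mass⟩ := hω'mass
  rw [mu_apply S measurableSet_closedBall]
  calc ENNReal.ofReal ((alph S * min (dm S [] ^ S.s) (S.kap ^ S.s)) * r ^ S.s)
      ≤ ENNReal.ofReal (mass S ω') := ENNReal.ofReal_le_ofReal hω'mass
    _ ≤ outer S (Xs S ∩ S.P ω') := outer_cell_ge S hω'sub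
    _ ≤ outer S (Metric.closedBall z r) :=
        measure_mono (le_trans Set.inter_subset_right hω'cover)

end AhlforsProof

open AhlforsProof in
/-- Any `s`-thick partition structure `(P_ω)_{ω ∈ T}` on a complete metric space has a
substructure `(P_ω)_{ω ∈ T'}` (with `T' ⊆ T` a subtree, whose set of children at each node
is an initial segment of the children in `T`) whose limit set is Ahlfors `s`-regular. -/
theorem thick_partition_structure_ahlfors_substructure {Z : Type*} [MetricSpace Z]
    [CompleteSpace Z] [MeasurableSpace Z] [BorelSpace Z]
    (s : ℝ) (hs : 0 < s)
    (T : Set (List ℕ)) (P : List ℕ → Set Z) (κ lam : ℝ)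
    (hκ : 0 < κ) (hlam0 : 0 < lam) (hlam1 : lam < 1)
    (hroot : ([] : List ℕ) ∈ T)
    (hpref : ∀ ω ∈ T, ∀ τ : List ℕ, τ <+: ω → τ ∈ T)
    (hclosed : ∀ ω ∈ T, IsClosed (P ω))
    (hdiam : ∀ ω ∈ T, 0 < Metric.diam (P ω))
    (hnest : ∀ ω ∈ T, ∀ τ ∈ T, ω <+: τ → P τ ⊆ P ω)
    (hdisj : ∀ ω ∈ T, ∀ τ ∈ T, ¬ ω <+: τ → ¬ τ <+: ω → Disjoint (P ω) (P τ))
    (hsep : ∀ ω ∈ T, ∀ a : ℕ, ω ++ [a] ∈ T →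
      (∀ p ∈ P (ω ++ [a]), ∀ q ∉ P ω, κ * Metric.diam (P ω) ≤ dist p q) ∧
      κ * Metric.diam (P ω) ≤ Metric.diam (P (ω ++ [a])) ∧
      Metric.diam (P (ω ++ [a])) ≤ lam * Metric.diam (P ω))
    (hthick : ∀ ω ∈ T, ENNReal.ofReal (Metric.diam (P ω) ^ s) ≤
      ∑' a : {a : ℕ // ω ++ [a] ∈ T}, ENNReal.ofReal (Metric.diam (P (ω ++ [a.1])) ^ s)) :
    ∃ T' : Set (List ℕ), T' ⊆ T ∧ ([] : List ℕ) ∈ T' ∧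
      (∀ ω ∈ T', ∀ τ : List ℕ, τ <+: ω → τ ∈ T') ∧
      (∀ ω ∈ T', ∃ N : ℕ, ∀ a : ℕ, ω ++ [a] ∈ T' ↔ (ω ++ [a] ∈ T ∧ a ≤ N)) ∧
      (∀ ω ∈ T', ∃ a : ℕ, ω ++ [a] ∈ T') ∧
      (∃ μ : Measure Z, IsFiniteMeasure μ ∧
        (∀ z : Z, z ∈ limitSet T' P ↔ ∀ r : ℝ, 0 < r → 0 < μ (ball z r)) ∧
        ∃ C : ℝ, 1 ≤ C ∧ ∀ z ∈ limitSet T' P, ∀ r : ℝ, 0 < r → r < 1 →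
          ENNReal.ofReal (C⁻¹ * r ^ s) ≤ μ (closedBall z r) ∧
          μ (closedBall z r) ≤ ENNReal.ofReal (C * r ^ s)) := by
  classical
  set S : Setup Z :=
    { T := T, P := P, s := s, kap := κ, lam := lam,
      hs := hs, hkap := hκ, hlam0 := hlam0, hlam1 := hlam1,
      hroot := hroot, hpref := hpref, hclosed := hclosed, hdiam := hdiam,
      hnest := hnest, hdisj := hdisj, hsep := hsep, hthick := hthick } with hS
  refine ⟨Tsub S, Tsub_subset_T S, root_mem_Tsub S,
    fun ω hω => Tsub_prefix_closed S hω,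
    fun ω hω => ⟨Nsel S ω (mass S ω), fun a => mem_child_iff S hω a⟩,
    fun ω hω => child_exists S hω, ?_⟩
  have hXeq : limitSet (Tsub S) P = Xs S := rfl
  refine ⟨mu S, mu_finite S, fun z => mu_support_iff S z, ?_⟩
  -- the constants
  set c₀ : ℝ := alph S * min (dm S [] ^ s) (κ ^ s) with hc0
  have hc0pos : 0 < c₀ := mul_pos (alph_pos S)
    (lt_min (dms_pos S hroot) (Real.rpow_pos_of_pos hκ s))
  set C₁ : ℝ := ((κ * κ) ^ s)⁻¹ with hC1
  have hC1pos : 0 < C₁ := inv_pos.2 (Real.rpow_pos_of_pos (mul_pos hκ hκ) s)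
  set C : ℝ := max 1 (max C₁ c₀⁻¹) with hC
  have hC1' : 1 ≤ C := le_max_left _ _
  have hCpos : 0 < C := lt_of_lt_of_le one_pos hC1'
  refine ⟨C, hC1', ?_⟩
  rintro z hz r hr hr1
  have hzX : z ∈ Xs S := hz
  constructor
  · -- lower bound
    have h1 := mu_closedBall_ge S hzX hr hr1
    have hinv : C⁻¹ ≤ c₀ := by
      rw [inv_le_comm₀ hCpos hc0pos]
      exact le_trans (le_max_right C₁ c₀⁻¹) (le_max_right 1 _)
    refine le_trans (ENNReal.ofReal_le_ofReal ?_) h1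
    apply mul_le_mul_of_nonneg_right hinv (Real.rpow_nonneg hr.le s)
  · -- upper bound
    have h1 := mu_closedBall_le S hzX hr
    have h2 : (r / (κ * κ)) ^ s = C₁ * r ^ s := by
      rw [Real.div_rpow hr.le (mul_pos hκ hκ).le, hC1]
      ring
    have h3 : C₁ * r ^ s ≤ C * r ^ s := by
      apply mul_le_mul_of_nonneg_right
        (le_trans (le_max_left C₁ c₀⁻¹) (le_max_right 1 _))
        (Real.rpow_nonneg hr.le s)
    calc mu S (Metric.closedBall z r) ≤ ENNReal.ofReal ((r / (κ * κ)) ^ s) := h1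
      _ = ENNReal.ofReal (C₁ * r ^ s) := by rw [h2]
      _ ≤ ENNReal.ofReal (C * r ^ s) := ENNReal.ofReal_le_ofReal h3
end

section
/- In the construction of the measure for an s-thick partition structure: let c = 1 - λ^s with 0 < λ < 1 and s > 0. Suppose μ_n(ω) satisfies c·D_ω^s ≤ μ_n(ω) < D_ω^s, and N_ω is the minimal index such that Σ_{a ≤ N_ω} D_{ωa}^s > μ_n(ω) (which exists since Σ_a D_{ωa}^s ≥ D_ω^s > μ_n(ω)). Define μ_{n+1}(ωa) = D_{ωa}^s·μ_n(ω)/Σ_{b ≤ N_ω} D_{ωb}^s for a ≤ N_ω. Then c·D_{ωa}^s ≤ μ_{n+1}(ωa) < D_{ωa}^s for all a ≤ N_ω. -/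
/-- Inductive step in the construction of the measure on an `s`-thick partition structure:
with `c = 1 - λ^s`, if `c·D_ω^s ≤ μₙ(ω) < D_ω^s` and `N` is the minimal index with
`Σ_{a ≤ N} D_{ωa}^s > μₙ(ω)`, then the redistributed mass
`μ_{n+1}(ωa) = D_{ωa}^s · μₙ(ω) / Σ_{b ≤ N} D_{ωb}^s` satisfies
`c·D_{ωa}^s ≤ μ_{n+1}(ωa) < D_{ωa}^s` for every child `a ≤ N`. -/
theorem measure_redistribution_step (s lam Dw : ℝ)
    (hs : 0 < s) (hlam0 : 0 < lam) (hlam1 : lam < 1) (hDw : 0 < Dw)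
    (F : Set ℕ) [DecidablePred (· ∈ F)] (D : ℕ → ℝ)
    (hD : ∀ a ∈ F, 0 < D a ∧ D a ≤ lam * Dw)
    (μn : ℝ)
    (hlow : (1 - lam ^ s) * Dw ^ s ≤ μn) (hhigh : μn < Dw ^ s)
    (N : ℕ)
    (hN : μn < ∑ a ∈ Finset.range (N + 1), if a ∈ F then D a ^ s else 0)
    (hminimal : (∑ a ∈ Finset.range N, if a ∈ F then D a ^ s else 0) ≤ μn) :
    ∀ a ∈ F, a ≤ N →
      (1 - lam ^ s) * D a ^ s ≤
          D a ^ s * μn / (∑ b ∈ Finset.range (N + 1), if b ∈ F then D b ^ s else 0) ∧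
      D a ^ s * μn / (∑ b ∈ Finset.range (N + 1), if b ∈ F then D b ^ s else 0) < D a ^ s := by
  intro a haF haN
  set S := ∑ b ∈ Finset.range (N + 1), if b ∈ F then D b ^ s else 0 with hS
  have hls1 : lam ^ s < 1 := Real.rpow_lt_one hlam0.le hlam1 hs
  have hls0 : 0 < lam ^ s := Real.rpow_pos_of_pos hlam0 s
  have hDws : 0 < Dw ^ s := Real.rpow_pos_of_pos hDw s
  have hμ0 : 0 < μn := lt_of_lt_of_le (by nlinarith) hlow
  have hS0 : 0 < S := lt_trans hμ0 hN
  have hDa : 0 < D a ^ s := Real.rpow_pos_of_pos (hD a haF).1 s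
  -- bound on the last term
  have hterm : (if N ∈ F then D N ^ s else 0) ≤ lam ^ s * Dw ^ s := by
    split
    · rename_i h
      calc D N ^ s ≤ (lam * Dw) ^ s :=
            Real.rpow_le_rpow (hD N h).1.le (hD N h).2 hs.le
        _ = lam ^ s * Dw ^ s := Real.mul_rpow hlam0.le hDw.le
    · positivity
  have hSle : S ≤ μn + lam ^ s * Dw ^ s := by
    rw [hS, Finset.sum_range_succ]
    exact add_le_add hminimal hterm
  have hkey : (1 - lam ^ s) * S ≤ μn := by nlinarith
  constructor
  · rw [le_div_iff₀ hS0]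
    nlinarith
  · rw [div_lt_iff₀ hS0]
    nlinarith
end

section
/- Let (X,d) be a Gromov hyperbolic metric space with hyperbolicity constant δ₀ (i.e., ⟨x|z⟩_w ≥ min(⟨x|y⟩_w, ⟨y|z⟩_w) - δ₀ for all x,y,z,w). Then there is a constant C = C(δ₀,σ) such that for any σ > 0 and x,y,z ∈ X with d(z,y) ≥ d(z,x): if some η lies in both shadows Shad_z(x,σ) and Shad_z(y,σ), then |d(x,y) - (d(z,y) - d(z,x))| ≤ C. Here the shadow is defined in terms of Gromov products with boundary points. -/
open Filter

/-- The Gromov product `⟨p|q⟩_b = (1/2)(d(p,b) + d(q,b) - d(p,q))`. -/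
noncomputable def gp {X : Type*} [MetricSpace X] (b p q : X) : ℝ :=
  (dist p b + dist q b - dist p q) / 2

/-- A Gromov sequence (with respect to the basepoint `o`): `⟨u_n|u_m⟩_o → ∞`. -/
def IsGromovSeq {X : Type*} [MetricSpace X] (o : X) (u : ℕ → X) : Prop :=
  Tendsto (fun p : ℕ × ℕ => gp o (u p.1) (u p.2)) atTop atTop

/-- Two Gromov sequences are equivalent (represent the same boundary point) when
`⟨u_n|v_n⟩_o → ∞`. -/
def SeqEquiv {X : Type*} [MetricSpace X] (o : X) (u v : ℕ → X) : Prop :=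
  Tendsto (fun n => gp o (u n) (v n)) atTop atTop

/-- The extended Gromov product `⟨p|ξ⟩_b` of a point `p` with the boundary point `ξ`
represented by the Gromov sequence `u`, defined as the infimum over representatives of the
liminf of the Gromov products. -/
noncomputable def gpB {X : Type*} [MetricSpace X] (o b p : X) (u : ℕ → X) : ℝ :=
  sInf {L : ℝ | ∃ v : ℕ → X, IsGromovSeq o v ∧ SeqEquiv o u v ∧
    L = Filter.liminf (fun n => gp b p (v n)) Filter.atTop}

lemma gp_nonneg {X : Type*} [MetricSpace X] (b p q : X) : 0 ≤ gp b p q := by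
  have h := dist_triangle p b q
  have h2 : dist b q = dist q b := dist_comm b q
  unfold gp; linarith

lemma gp_le {X : Type*} [MetricSpace X] (b p q : X) : gp b p q ≤ dist p b := by
  have h := dist_triangle q p b
  have h2 : dist q p = dist p q := dist_comm q p
  unfold gp; linarith

lemma gp_comm {X : Type*} [MetricSpace X] (b p q : X) : gp b p q = gp b q p := by
  unfold gp; rw [dist_comm p q]; ring

lemma gp_flip {X : Type*} [MetricSpace X] (z x p : X) : gp z x p + gp x z p = dist x z := by
  unfold gp
  rw [dist_comm z x, dist_comm p x, dist_comm p z]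
  ring

lemma gp_base {X : Type*} [MetricSpace X] (o b p q : X) : gp o p q - dist o b ≤ gp b p q := by
  have h1 : dist p o ≤ dist p b + dist b o := dist_triangle p b o
  have h2 : dist q o ≤ dist q b + dist b o := dist_triangle q b o
  have h3 : dist b o = dist o b := dist_comm b o
  unfold gp; linarith

lemma seqEquiv_self {X : Type*} [MetricSpace X] (o : X) (u : ℕ → X)
    (hu : IsGromovSeq o u) : SeqEquiv o u u := by
  refine tendsto_atTop.2 fun b => ?_
  obtain ⟨N, hN⟩ := eventually_atTop.1 (tendsto_atTop.1 hu b)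
  refine eventually_atTop.2 ⟨max N.1 N.2, fun n hn => ?_⟩
  exact hN (n, n) ⟨le_trans (le_max_left _ _) hn, le_trans (le_max_right _ _) hn⟩

/-- From `gpB ≤ σ` extract a representative whose liminf is `≤ σ + 1`. -/
lemma exists_rep {X : Type*} [MetricSpace X] (o b p : X) (u : ℕ → X)
    (hu : IsGromovSeq o u) {σ : ℝ} (h : gpB o b p u ≤ σ) :
    ∃ v : ℕ → X, IsGromovSeq o v ∧ SeqEquiv o u v ∧
      liminf (fun n => gp b p (v n)) atTop ≤ σ + 1 := by
  have hne : {L : ℝ | ∃ v : ℕ → X, IsGromovSeq o v ∧ SeqEquiv o u v ∧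
      L = Filter.liminf (fun n => gp b p (v n)) Filter.atTop}.Nonempty :=
    ⟨_, u, hu, seqEquiv_self o u hu, rfl⟩
  have hlt : gpB o b p u < σ + 1 := lt_of_le_of_lt h (by linarith)
  obtain ⟨L, ⟨v, hv1, hv2, hL⟩, hLlt⟩ := exists_lt_of_csInf_lt hne hlt
  exact ⟨v, hv1, hv2, by rw [← hL]; exact hLlt.le⟩

/-- Intersecting Shadows Lemma: in a `δ₀`-hyperbolic metric space, for every `σ > 0` there
is a constant `C = C(δ₀,σ)` such that whenever `d(z,y) ≥ d(z,x)` and a boundary point `η`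
(represented by a Gromov sequence `u`) lies in both shadows `Shad_z(x,σ)` and
`Shad_z(y,σ)`, one has `|d(x,y) - (d(z,y) - d(z,x))| ≤ C`. -/
theorem intersecting_shadows {X : Type*} [MetricSpace X] (o : X) (δ₀ : ℝ) (hδ : 0 ≤ δ₀)
    (hhyp : ∀ x y z w : X, min (gp w x y) (gp w y z) - δ₀ ≤ gp w x z) :
    ∀ σ : ℝ, 0 < σ → ∃ C : ℝ, ∀ (x y z : X) (u : ℕ → X),
      IsGromovSeq o u → dist z x ≤ dist z y →
      gpB o x z u ≤ σ → gpB o y z u ≤ σ →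
      |dist x y - (dist z y - dist z x)| ≤ C := by
  intro σ hσ
  refine ⟨2 * σ + 4 * δ₀ + 4, ?_⟩
  intro x y z u hu hzxy hx hy
  -- extract representatives
  obtain ⟨v, hv, huv, hvlim⟩ := exists_rep o x z u hu hx
  obtain ⟨w, hw, huw, hwlim⟩ := exists_rep o y z u hu hy
  -- frequent smallness
  have hA : ∃ᶠ n in atTop, gp x z (v n) < σ + 2 :=
    frequently_lt_of_liminf_lt
      (isCoboundedUnder_ge_of_le atTop (fun n => gp_le x z (v n)))
      (lt_of_le_of_lt hvlim (by linarith))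
  have hB : ∃ᶠ m in atTop, gp y z (w m) < σ + 2 :=
    frequently_lt_of_liminf_lt
      (isCoboundedUnder_ge_of_le atTop (fun m => gp_le y z (w m)))
      (lt_of_le_of_lt hwlim (by linarith))
  -- diagonal cross equivalence: ⟨v_m | w_m⟩_o → ∞
  have hdiag : Tendsto (fun m => gp o (v m) (w m)) atTop atTop := by
    have hpt : ∀ m, min (gp o (v m) (u m)) (gp o (u m) (w m)) - δ₀ ≤ gp o (v m) (w m) :=
      fun m => hhyp (v m) (u m) (w m) o
    have hvu : Tendsto (fun m => gp o (v m) (u m)) atTop atTop := by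
      have : (fun m => gp o (v m) (u m)) = fun m => gp o (u m) (v m) := by
        funext m; exact gp_comm o (v m) (u m)
      rw [this]; exact huv
    have hmin : Tendsto (fun m => min (gp o (v m) (u m)) (gp o (u m) (w m)) - δ₀)
        atTop atTop := by
      apply tendsto_atTop_add_const_right
      exact tendsto_atTop.2 fun b => ((tendsto_atTop.1 hvu b).and (tendsto_atTop.1 huw b)).mono
        fun m hm => le_min hm.1 hm.2
    exact tendsto_atTop_mono hpt hmin
  -- full cross: ⟨v_n | w_m⟩_o → ∞ as (n,m) → ∞
  have hcross : Tendsto (fun p : ℕ × ℕ => gp o (v p.1) (w p.2)) atTop atTop := by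
    have hpt : ∀ p : ℕ × ℕ,
        min (gp o (v p.1) (v p.2)) (gp o (v p.2) (w p.2)) - δ₀ ≤ gp o (v p.1) (w p.2) :=
      fun p => hhyp (v p.1) (v p.2) (w p.2) o
    have hsnd : Tendsto (fun p : ℕ × ℕ => gp o (v p.2) (w p.2)) atTop atTop := by
      rw [← prod_atTop_atTop_eq]
      exact hdiag.comp tendsto_snd
    have hmin : Tendsto (fun p : ℕ × ℕ =>
        min (gp o (v p.1) (v p.2)) (gp o (v p.2) (w p.2)) - δ₀) atTop atTop := by
      apply tendsto_atTop_add_const_right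
      exact tendsto_atTop.2 fun b => ((tendsto_atTop.1 hv b).and (tendsto_atTop.1 hsnd b)).mono
        fun p hp => le_min hp.1 hp.2
    exact tendsto_atTop_mono hpt hmin
  -- pick indices
  obtain ⟨N, hN⟩ := eventually_atTop.1 (tendsto_atTop.1 hcross (dist z y + dist o z + 1))
  obtain ⟨n, hnN, hn⟩ := frequently_atTop.1 hA N.1
  obtain ⟨m, hmN, hm⟩ := frequently_atTop.1 hB N.2
  have hNnm : N ≤ (n, m) := ⟨hnN, hmN⟩
  have hbig : dist z y + dist o z + 1 ≤ gp o (v n) (w m) := hN (n, m) hNnm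
  -- move to basepoint z
  have hvw_z : dist z y + 1 ≤ gp z (v n) (w m) := by
    have := gp_base o z (v n) (w m)
    linarith
  -- key lower bounds at basepoint z
  have hxv : dist z x - (σ + 2) ≤ gp z x (v n) := by
    have := gp_flip z x (v n)
    rw [dist_comm x z] at this
    linarith
  have hyw : dist z x - (σ + 2) ≤ gp z y (w m) := by
    have := gp_flip z y (w m)
    rw [dist_comm y z] at this
    linarith
  -- hyperbolicity twice
  have h1 : dist z x - (σ + 2) - δ₀ ≤ gp z x (w m) := by
    have hh := hhyp x (v n) (w m) z
    have : dist z x - (σ + 2) ≤ min (gp z x (v n)) (gp z (v n) (w m)) := by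
      refine le_min hxv ?_
      have hd := dist_nonneg (x := z) (y := x)
      linarith [hzxy]
    linarith
  have h2 : dist z x - (σ + 2) - 2 * δ₀ ≤ gp z x y := by
    have hh := hhyp x (w m) y z
    have hwy : gp z (w m) y = gp z y (w m) := gp_comm z (w m) y
    have : dist z x - (σ + 2) - δ₀ ≤ min (gp z x (w m)) (gp z (w m) y) := by
      refine le_min h1 ?_
      rw [hwy]; linarith
    linarith
  -- conclude
  have hfin : gp x z y ≤ σ + 2 + 2 * δ₀ := by
    have := gp_flip z x y
    rw [dist_comm x z] at this
    linarith
  have hval : dist x y - (dist z y - dist z x) = 2 * gp x z y := by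
    unfold gp
    rw [dist_comm y x]
    ring
  rw [hval, abs_of_nonneg (by linarith [gp_nonneg x z y])]
  linarith
end
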